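/- arXiv:1211.0463 — 6 statements merged into one kernel-verified Lean document; each statement's English description precedes it below -/
import Mathlib

section
/- For every integer n ≥ 3, the cycle C_n satisfies ch_{σ*}^e(C_n) = 2; that is, 2 is the least integer k such that for every assignment to each edge e of C_n of a set L_e of k real numbers, there exist a linear order on the edges of C_n and a weighting w with w(e) ∈ L_e for every edge e whose induced sequence colouring of the vertices is proper. -/
/-!
Common definitions: sequence colourings induced by an edge weighting and a linear
order on the edge set of a finite simple graph.
-/

open Finset

variable {V : Type*}

/-- The list of edges incident to `v`, sorted in increasing order with respect to the
linear order `σ` on `E(G)`. -/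
noncomputable def incEdges [Fintype V] [DecidableEq V] (G : SimpleGraph V) [DecidableRel G.Adj]
    (σ : LinearOrder G.edgeSet) (v : V) : List G.edgeSet :=
  letI := σ
  ((Finset.univ : Finset G.edgeSet).filter (fun e : G.edgeSet => v ∈ (e : Sym2 V))).sort σ.le

/-- The induced sequence colouring: `c(v)` is the list of weights `w(e)` of the edges `e`
incident to `v`, written in increasing order of `e` with respect to `σ`. -/
noncomputable def seqColor [Fintype V] [DecidableEq V] (G : SimpleGraph V) [DecidableRel G.Adj]
    (σ : LinearOrder G.edgeSet) {α : Type*} (w : G.edgeSet → α) (v : V) : List α :=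
  (incEdges G σ v).map w

/-- The induced sequence colouring is proper: adjacent vertices receive distinct sequences. -/
def ProperSeq [Fintype V] [DecidableEq V] (G : SimpleGraph V) [DecidableRel G.Adj]
    (σ : LinearOrder G.edgeSet) (w : G.edgeSet → ℝ) : Prop :=
  ∀ u v : V, G.Adj u v → seqColor G σ w u ≠ seqColor G σ w v

/-- `cycleSeqListWeightable n k` : for every assignment to each edge of the cycle `C_n` of a
set of `k` real numbers, there exist a linear order on the edges and a weighting from the
sets whose induced sequence colouring of the vertices is proper. -/
def cycleSeqListWeightable (n k : ℕ) : Prop :=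
  ∀ L : (SimpleGraph.cycleGraph n).edgeSet → Finset ℝ, (∀ e, (L e).card = k) →
    ∃ (σ : LinearOrder (SimpleGraph.cycleGraph n).edgeSet)
      (w : (SimpleGraph.cycleGraph n).edgeSet → ℝ),
      (∀ e, w e ∈ L e) ∧ ProperSeq (SimpleGraph.cycleGraph n) σ w

namespace CycleSeqAux

open SimpleGraph
open Fin.CommRing

variable {m : ℕ}

/-- The `i`-th edge of the cycle, joining `i` and `i+1`. -/
def Ed (m : ℕ) (i : Fin (m+3)) : (cycleGraph (m+3)).edgeSet :=
  ⟨s(i, i+1), by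
    rw [SimpleGraph.mem_edgeSet, SimpleGraph.cycleGraph_adj]
    right; simp⟩

lemma Ed_coe (i : Fin (m+3)) : (Ed m i : Sym2 (Fin (m+3))) = s(i, i+1) := rfl

lemma Ed_inj {i j : Fin (m+3)} (h : Ed m i = Ed m j) : i = j := by
  have h' : s(i, i+1) = s(j, j+1) := congrArg Subtype.val h
  rw [Sym2.eq_iff] at h'
  rcases h' with ⟨h1, _⟩ | ⟨h1, h2⟩
  · exact h1
  · exfalso
    have hii : i = i + 2 := by
      calc i = j + 1 := h1
        _ = (i + 1) + 1 := by rw [h2]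
        _ = i + 2 := by ring
    have h3 : (2 : Fin (m+3)) = 0 := (left_eq_add).mp hii
    simp [Fin.ext_iff] at h3
    rw [Nat.mod_eq_of_lt (by omega)] at h3; omega

lemma Ed_surj (e : (cycleGraph (m+3)).edgeSet) : ∃ i, Ed m i = e := by
  obtain ⟨q, hq⟩ := e
  induction q with
  | _ u v =>
    have hq' := hq
    rw [SimpleGraph.mem_edgeSet, SimpleGraph.cycleGraph_adj] at hq'
    rcases hq' with h | h
    · have hu : u = v + 1 := by rw [← h]; ring
      subst hu
      exact ⟨v, Subtype.ext (by rw [Ed_coe, Sym2.eq_swap])⟩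
    · have hv : v = u + 1 := by rw [← h]; ring
      subst hv
      exact ⟨u, Subtype.ext (by rw [Ed_coe])⟩

noncomputable def idx (e : (cycleGraph (m+3)).edgeSet) : Fin (m+3) := (Ed_surj e).choose

lemma Ed_idx (e : (cycleGraph (m+3)).edgeSet) : Ed m (idx e) = e := (Ed_surj e).choose_spec

lemma idx_Ed (i : Fin (m+3)) : idx (Ed m i) = i := Ed_inj (Ed_idx (Ed m i))

lemma mem_Ed_iff (v i : Fin (m+3)) : v ∈ (Ed m i : Sym2 (Fin (m+3))) ↔ i = v ∨ i = v - 1 := by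
  rw [Ed_coe, Sym2.mem_iff]
  constructor
  · rintro (rfl | rfl)
    · exact Or.inl rfl
    · right; ring
  · rintro (rfl | rfl)
    · exact Or.inl rfl
    · right; ring

/-- The order key: edge `e_i` gets key `i`, except `e_0` which gets key `m+3` (the largest). -/
noncomputable def kap (e : (cycleGraph (m+3)).edgeSet) : ℕ :=
  if idx e = 0 then m+3 else (idx e).val

lemma kap_Ed (i : Fin (m+3)) : kap (Ed m i) = if i = 0 then m+3 else i.val := by
  rw [kap, idx_Ed]

lemma kap_inj : Function.Injective (kap (m := m)) := by
  intro a b hab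
  have ha := Ed_idx a
  have hb := Ed_idx b
  rw [← ha, ← hb]
  congr 1
  rw [kap, kap] at hab
  split_ifs at hab with h1 h2 h2
  · rw [h1, h2]
  · exact absurd hab.symm (Nat.ne_of_lt (idx b).isLt)
  · exact absurd hab (Nat.ne_of_lt (idx a).isLt)
  · exact Fin.ext hab

noncomputable def sig (m : ℕ) : LinearOrder (cycleGraph (m+3)).edgeSet :=
  LinearOrder.lift' kap kap_inj

lemma filt (v : Fin (m+3)) :
    ((Finset.univ : Finset (cycleGraph (m+3)).edgeSet).filter
      (fun e : (cycleGraph (m+3)).edgeSet => v ∈ (e : Sym2 (Fin (m+3)))))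
      = {Ed m (v-1), Ed m v} := by
  ext e
  simp only [Finset.mem_filter, Finset.mem_univ, true_and, Finset.mem_insert,
    Finset.mem_singleton]
  rw [← Ed_idx e, mem_Ed_iff]
  constructor
  · rintro (h | h)
    · right; rw [h]
    · left; rw [h]
  · rintro (h | h)
    · right; exact Ed_inj h
    · left; exact Ed_inj h

lemma Ed_ne (v : Fin (m+3)) : Ed m (v-1) ≠ Ed m v := by
  intro h
  have h1 := Ed_inj h
  have h2 : (1 : Fin (m+3)) = 0 := left_eq_add.mp (sub_eq_iff_eq_add.mp h1)
  simp [Fin.ext_iff] at h2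

lemma sort_pair {a b : (cycleGraph (m+3)).edgeSet} (hne : a ≠ b) (hle : kap a ≤ kap b) :
    Finset.sort {a, b} (sig m).le = [a, b] := by
  letI := sig m
  rw [Finset.sort_insert]
  · rw [Finset.sort_singleton]
  · intro c hc
    rw [Finset.mem_singleton] at hc
    rw [hc]
    exact hle
  · rw [Finset.mem_singleton]; exact hne

lemma incEdges_eq (v : Fin (m+3)) (hv : v ≠ 1) :
    incEdges (cycleGraph (m+3)) (sig m) v = [Ed m (v-1), Ed m v] := by
  rw [incEdges, filt]
  apply sort_pair (Ed_ne v)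
  rw [kap_Ed, kap_Ed]
  have h1 : v - 1 ≠ 0 := fun h => hv (by rwa [sub_eq_zero] at h)
  rw [if_neg h1]
  by_cases h0 : v = 0
  · rw [if_pos h0]
    exact le_of_lt (v-1).isLt
  · rw [if_neg h0]
    rw [Fin.coe_sub_one, if_neg h0]
    omega

lemma incEdges_one : incEdges (cycleGraph (m+3)) (sig m) 1 = [Ed m 1, Ed m 0] := by
  rw [incEdges, filt]
  have h10 : (1 : Fin (m+3)) - 1 = 0 := sub_self 1
  rw [h10]
  rw [Finset.pair_comm]
  apply sort_pair
  · intro h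
    have := Ed_inj h
    simp [Fin.ext_iff] at this
  · rw [kap_Ed, kap_Ed, if_pos rfl, if_neg (by simp [Fin.ext_iff])]
    have : ((1 : Fin (m+3))).val = 1 := by simp
    omega

/-- Picks an element of `S` different from `x`, when possible. -/
noncomputable def pick (S : Finset ℝ) (x : ℝ) : ℝ :=
  if h : ∃ y ∈ S, y ≠ x then h.choose else 0

lemma pick_spec {S : Finset ℝ} (hS : S.card = 2) (x : ℝ) : pick S x ∈ S ∧ pick S x ≠ x := by
  have h : ∃ y ∈ S, y ≠ x := by
    by_contra hc
    push_neg at hc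
    have hsub : S ⊆ {x} := fun y hy => Finset.mem_singleton.mpr (hc y hy)
    have := Finset.card_le_card hsub
    simp [hS] at this
  rw [pick, dif_pos h]
  exact ⟨h.choose_spec.1, h.choose_spec.2⟩

section Weights

variable (L : (cycleGraph (m+3)).edgeSet → Finset ℝ)

noncomputable def uSeq : ℕ → ℝ
  | 0 => pick (L (Ed m 2)) (pick (L (Ed m 0)) 0)
  | (k+1) => pick (L (Ed m ((k+3 : ℕ) : Fin (m+3)))) (uSeq k)

/-- The weight at edge `e_i`. -/
noncomputable def fW (i : Fin (m+3)) : ℝ :=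
  if i.val = 0 then pick (L (Ed m 0)) 0
  else if i.val = 1 then pick (L (Ed m 1)) (uSeq L m)
  else uSeq L (i.val - 2)

variable (hL : ∀ e, (L e).card = 2)
include hL

lemma fW_mem (i : Fin (m+3)) : fW L i ∈ L (Ed m i) := by
  rw [fW]
  split_ifs with h0 h1
  · have : i = 0 := Fin.ext h0
    rw [this]
    exact (pick_spec (hL _) _).1
  · have : i = 1 := Fin.ext (by simpa using h1)
    rw [this]
    exact (pick_spec (hL _) _).1
  · have h2 : 2 ≤ i.val := by omega
    rcases Nat.lt_or_ge i.val 3 with h3 | h3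
    · have hi : i = 2 := Fin.ext (by simp [Fin.ext_iff, Nat.mod_eq_of_lt (show 2 < m+3 by omega)]; omega)
      have : i.val - 2 = 0 := by omega
      rw [this, hi]
      exact (pick_spec (hL _) _).1
    · have hk : i.val - 2 = (i.val - 3) + 1 := by omega
      rw [hk, uSeq]
      have : ((i.val - 3 + 3 : ℕ) : Fin (m+3)) = i := by
        have : i.val - 3 + 3 = i.val := by omega
        rw [this, Fin.cast_val_eq_self]
      rw [this]
      exact (pick_spec (hL _) _).1

lemma fW_two_ne_zero : fW L (2 : Fin (m+3)) ≠ fW L 0 := by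
  have hv2 : ((2 : Fin (m+3))).val = 2 := by simp [Fin.ext_iff]
  have hv0 : ((0 : Fin (m+3))).val = 0 := rfl
  rw [fW, fW, hv0, if_pos rfl, hv2]
  norm_num
  exact (pick_spec (hL _) (pick (L (Ed m 0)) 0)).2

lemma fW_step {i : Fin (m+3)} (hi : 3 ≤ i.val) : fW L i ≠ fW L (i - 1) := by
  have hi0 : i ≠ 0 := by intro h; rw [h] at hi; simp at hi
  have hsub : (i - 1).val = i.val - 1 := by
    rw [Fin.coe_sub_one, if_neg hi0]
  rw [fW, fW, hsub]
  rw [if_neg (by omega), if_neg (by omega), if_neg (by omega), if_neg (by omega)]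
  have hk : i.val - 2 = (i.val - 3) + 1 := by omega
  have hk' : i.val - 1 - 2 = i.val - 3 := by omega
  rw [hk, hk', uSeq]
  exact (pick_spec (hL _) _).2

lemma fW_one_ne_last : fW L (1 : Fin (m+3)) ≠ fW L (0 - 1) := by
  have hv1 : ((1 : Fin (m+3))).val = 1 := by simp
  have hlast : ((0 - 1 : Fin (m+3))).val = m + 2 := by
    rw [Fin.coe_sub_one, if_pos rfl]
  rw [fW, fW, hv1, hlast]
  rw [if_neg (by omega), if_pos rfl, if_neg (by omega), if_neg (by omega)]
  have : m + 2 - 2 = m := by omega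
  rw [this]
  exact (pick_spec (hL _) _).2

end Weights

end CycleSeqAux

namespace CycleSeqAux

open Fin.CommRing

lemma val_add_one_lt {m : ℕ} {v : Fin (m+3)} (h : v.val + 1 < m + 3) :
    ((v + 1 : Fin (m+3))).val = v.val + 1 := by
  rw [Fin.val_add]
  have h1 : ((1 : Fin (m+3))).val = 1 := by simp
  rw [h1, Nat.mod_eq_of_lt h]

lemma add_one_eq_zero {m : ℕ} {v : Fin (m+3)} (h : v.val = m + 2) :
    v + 1 = 0 := by
  apply Fin.ext
  rw [Fin.val_add]
  have h1 : ((1 : Fin (m+3))).val = 1 := by simp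
  rw [h1, h]
  simp

lemma eq_zero_sub_one {m : ℕ} {v : Fin (m+3)} (h : v.val = m + 2) :
    v = 0 - 1 := by
  apply Fin.ext
  rw [Fin.coe_sub_one, if_pos rfl, h]

lemma key_step (m : ℕ) (L : (SimpleGraph.cycleGraph (m+3)).edgeSet → Finset ℝ)
    (hL : ∀ e, (L e).card = 2) (v : Fin (m+3)) :
    seqColor (SimpleGraph.cycleGraph (m+3)) (sig m) (fun e => fW L (idx e)) v ≠
    seqColor (SimpleGraph.cycleGraph (m+3)) (sig m) (fun e => fW L (idx e)) (v + 1) := by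
  set g := fW L with hg
  set w : (SimpleGraph.cycleGraph (m+3)).edgeSet → ℝ := fun e => fW L (idx e) with hw
  have w_Ed : ∀ i : Fin (m+3), w (Ed m i) = g i := fun i => by
    rw [hw]; simp only [idx_Ed]; rfl
  have seq_ne_one : ∀ u : Fin (m+3), u ≠ 1 →
      seqColor (SimpleGraph.cycleGraph (m+3)) (sig m) w u = [g (u-1), g u] := by
    intro u hu
    rw [seqColor, incEdges_eq u hu]
    simp [w_Ed]
  have seq_one : seqColor (SimpleGraph.cycleGraph (m+3)) (sig m) w 1 = [g 1, g 0] := by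
    rw [seqColor, incEdges_one]
    simp [w_Ed]
  have h1v : ((1 : Fin (m+3))).val = 1 := by simp
  by_cases hv0 : v = 0
  · subst hv0
    rw [zero_add, seq_one, seq_ne_one 0 (by simp [Fin.ext_iff])]
    intro h
    simp only [List.cons.injEq, and_true] at h
    exact (fW_one_ne_last L hL) h.symm
  · by_cases hv1 : v = 1
    · subst hv1
      have h2 : (1 : Fin (m+3)) + 1 = 2 := one_add_one_eq_two
      have h2v : ((2 : Fin (m+3))).val = 2 := by simp [Fin.ext_iff]
      have h21 : (2 : Fin (m+3)) - 1 = 1 := by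
        rw [sub_eq_iff_eq_add, one_add_one_eq_two]
      rw [h2, seq_one, seq_ne_one 2 (by rw [Ne, Fin.ext_iff, h2v, h1v]; omega), h21]
      intro h
      simp only [List.cons.injEq, and_true] at h
      exact (fW_two_ne_zero L hL) h.2.symm
    · -- v.val ≥ 2
      have hv2 : 2 ≤ v.val := by
        rcases Nat.lt_or_ge v.val 2 with h | h
        · exfalso
          interval_cases hvv : v.val
          · exact hv0 (Fin.ext hvv)
          · exact hv1 (Fin.ext (by rw [hvv, h1v]))
        · exact h
      rcases Nat.lt_or_ge (v.val + 1) (m + 3) with hlt | hge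
      · -- v + 1 ≠ 0
        have hval : ((v + 1 : Fin (m+3))).val = v.val + 1 := val_add_one_lt hlt
        have hvp1 : v + 1 ≠ 1 := by
          rw [Ne, Fin.ext_iff, hval, h1v]; omega
        rw [seq_ne_one v hv1, seq_ne_one (v+1) hvp1, add_sub_cancel_right]
        intro h
        simp only [List.cons.injEq, and_true] at h
        exact (fW_step L hL (i := v + 1) (by omega)) (by rw [add_sub_cancel_right]; exact h.2.symm)
      · -- v.val = m + 2, v + 1 = 0
        have hvv : v.val = m + 2 := by have := v.isLt; omega
        rw [add_one_eq_zero hvv, seq_ne_one v hv1, seq_ne_one 0 (by simp [Fin.ext_iff])]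
        rw [← eq_zero_sub_one hvv]
        intro h
        simp only [List.cons.injEq, and_true] at h
        rcases Nat.eq_zero_or_pos m with hm | hm
        · -- m = 0 : v = 2, v - 1 = 1
          subst hm
          have hv2' : v = 2 := Fin.ext (by rw [hvv]; simp [Fin.ext_iff])
          have hvm1 : v - 1 = 1 := by
            rw [hv2', sub_eq_iff_eq_add, one_add_one_eq_two]
          rw [hvm1] at h
          exact (fW_one_ne_last L hL) (by rw [← eq_zero_sub_one hvv]; exact h.1)
        · exact (fW_step L hL (i := v) (by omega)) h.1.symm

end CycleSeqAux

/-- For every `n ≥ 3`, `ch_{σ*}^e(C_n) = 2`. -/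
theorem stmt_0 (n : ℕ) (hn : 3 ≤ n) :
    IsLeast {k : ℕ | cycleSeqListWeightable n k} 2 := by
  obtain ⟨m, rfl⟩ : ∃ m, n = m + 3 := ⟨n - 3, by omega⟩
  open CycleSeqAux in
  constructor
  · -- cycleSeqListWeightable (m+3) 2
    intro L hL
    refine ⟨sig m, fun e => fW L (idx e), ?_, ?_⟩
    · intro e
      have := fW_mem L hL (idx e)
      rwa [Ed_idx] at this
    · intro a b hab
      rw [SimpleGraph.cycleGraph_adj] at hab
      rcases hab with h | h
      · have ha : a = b + 1 := by rw [← h]; open Fin.CommRing in ring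
        rw [ha]
        exact (key_step m L hL b).symm
      · have hb : b = a + 1 := by rw [← h]; open Fin.CommRing in ring
        rw [hb]
        exact key_step m L hL a
  · -- lower bound
    rintro k hk
    by_contra hlt
    push_neg at hlt
    interval_cases k
    · obtain ⟨σ, w, hw, -⟩ := hk (fun _ => (∅ : Finset ℝ)) (fun _ => rfl)
      simpa using hw (Ed m 0)
    · obtain ⟨σ, w, hw, hp⟩ := hk (fun _ => ({0} : Finset ℝ)) (fun _ => rfl)
      have hw0 : ∀ e, w e = 0 := fun e => Finset.mem_singleton.mp (hw e)
      have hadj : (SimpleGraph.cycleGraph (m+3)).Adj 0 1 := by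
        rw [SimpleGraph.cycleGraph_adj]
        right; simp
      apply hp 0 1 hadj
      have hseq : ∀ v : Fin (m+3),
          seqColor (SimpleGraph.cycleGraph (m+3)) σ w v = List.replicate 2 0 := by
        intro v
        letI := σ
        apply List.eq_replicate_iff.mpr
        constructor
        · rw [seqColor, List.length_map, incEdges, Finset.length_sort, filt,
            Finset.card_insert_of_notMem (by rw [Finset.mem_singleton]; exact Ed_ne v),
            Finset.card_singleton]
        · intro b hb
          rw [seqColor, List.mem_map] at hb
          obtain ⟨e, -, rfl⟩ := hb
          exact hw0 e
      rw [hseq 0, hseq 1]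
end

section
/- For every finite simple graph G, ch_{σ*}^t(G) ≤ 2: for every assignment to each vertex and each edge of G of a set of two real numbers, there exist a linear order on the disjoint union V(G) ∪ E(G) and a total weighting w taking each vertex's and edge's weight from its assigned set, such that the induced total sequence colouring of the vertices is proper. -/
/-!
Common definitions: total sequence colourings induced by a total weighting and a linear
order on the disjoint union `V(G) ⊕ E(G)` of a finite simple graph.
-/

open Finset

variable {V : Type*}

/-- The elements of `V(G) ⊕ E(G)` relevant to the vertex `v` (namely `v` itself together
with the edges incident to `v`), sorted in increasing order with respect to the linear
order `σ` on `V(G) ⊕ E(G)`. -/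
noncomputable def incTotal [Fintype V] [DecidableEq V] (G : SimpleGraph V) [DecidableRel G.Adj]
    (σ : LinearOrder (V ⊕ G.edgeSet)) (v : V) : List (V ⊕ G.edgeSet) :=
  letI := σ
  letI : DecidablePred (fun x : V ⊕ G.edgeSet =>
      Sum.elim (fun u : V => u = v) (fun e : G.edgeSet => v ∈ (e : Sym2 V)) x) :=
    Classical.decPred _
  ((Finset.univ : Finset (V ⊕ G.edgeSet)).filter
    (fun x : V ⊕ G.edgeSet =>
      Sum.elim (fun u : V => u = v) (fun e : G.edgeSet => v ∈ (e : Sym2 V)) x)).sort σ.le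

/-- The induced total sequence colouring: `c(v)` consists of `w(v)` together with the
weights `w(e)` of the edges `e` incident to `v`, all written in increasing order with
respect to `σ`. -/
noncomputable def totalSeqColor [Fintype V] [DecidableEq V] (G : SimpleGraph V)
    [DecidableRel G.Adj] (σ : LinearOrder (V ⊕ G.edgeSet)) (w : V ⊕ G.edgeSet → ℝ) (v : V) :
    List ℝ :=
  (incTotal G σ v).map w

/-- The induced total sequence colouring is proper: adjacent vertices receive distinct
sequences. -/
def ProperTotalSeq [Fintype V] [DecidableEq V] (G : SimpleGraph V) [DecidableRel G.Adj]
    (σ : LinearOrder (V ⊕ G.edgeSet)) (w : V ⊕ G.edgeSet → ℝ) : Prop :=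
  ∀ u v : V, G.Adj u v → totalSeqColor G σ w u ≠ totalSeqColor G σ w v


open Finset Function

section KSort

variable {α : Type*}

/-- insertIdx as take ++ cons ++ drop -/
theorem insertIdx_eq_take_cons_drop' (z : α) :
    ∀ (p : ℕ) (l : List α), p ≤ l.length →
      l.insertIdx p z = l.take p ++ z :: l.drop p
  | 0, l, _ => by simp
  | (p+1), [], h => by simp at h
  | (p+1), (a :: l), h => by
    simp only [List.insertIdx_succ_cons, List.take_succ_cons, List.drop_succ_cons,
      List.cons_append, List.cons.injEq, true_and]
    exact insertIdx_eq_take_cons_drop' z p l (by simpa using h)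

theorem map_insertIdx' {β : Type*} (f : α → β) (z : α) :
    ∀ (p : ℕ) (l : List α), p ≤ l.length →
      (l.insertIdx p z).map f = (l.map f).insertIdx p (f z)
  | 0, l, _ => by simp
  | (p+1), [], h => by simp at h
  | (p+1), (a :: l), h => by
    simp only [List.insertIdx_succ_cons, List.map_cons, List.cons.injEq, true_and]
    exact map_insertIdx' f z p l (by simpa using h)

/-- Sort a finset by an injective rational key. -/
noncomputable def ksort (key : α → ℚ) (hinj : Injective key) (X : Finset α) : List α :=
  letI : DecidableRel (fun x y : α => key x ≤ key y) :=
    fun x y => inferInstanceAs (Decidable (key x ≤ key y))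
  letI : IsTrans α (fun x y : α => key x ≤ key y) := ⟨fun _ _ _ h h' => le_trans h h'⟩
  letI : IsAntisymm α (fun x y : α => key x ≤ key y) :=
    ⟨fun _ _ h h' => hinj (le_antisymm h h')⟩
  letI : IsTotal α (fun x y : α => key x ≤ key y) := ⟨fun _ _ => le_total _ _⟩
  X.sort (fun x y : α => key x ≤ key y)

theorem ksort_perm (key : α → ℚ) (hinj : Injective key) (X : Finset α) :
    (ksort key hinj X).Perm X.toList := by
  unfold ksort
  letI : DecidableRel (fun x y : α => key x ≤ key y) :=
    fun x y => inferInstanceAs (Decidable (key x ≤ key y))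
  letI : IsTrans α (fun x y : α => key x ≤ key y) := ⟨fun _ _ _ h h' => le_trans h h'⟩
  letI : IsAntisymm α (fun x y : α => key x ≤ key y) :=
    ⟨fun _ _ h h' => hinj (le_antisymm h h')⟩
  letI : IsTotal α (fun x y : α => key x ≤ key y) := ⟨fun _ _ => le_total _ _⟩
  exact Finset.sort_perm_toList _ _

theorem ksort_pairwise (key : α → ℚ) (hinj : Injective key) (X : Finset α) :
    (ksort key hinj X).Pairwise (fun x y => key x ≤ key y) := by
  unfold ksort
  letI : DecidableRel (fun x y : α => key x ≤ key y) :=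
    fun x y => inferInstanceAs (Decidable (key x ≤ key y))
  letI : IsTrans α (fun x y : α => key x ≤ key y) := ⟨fun _ _ _ h h' => le_trans h h'⟩
  letI : IsAntisymm α (fun x y : α => key x ≤ key y) :=
    ⟨fun _ _ h h' => hinj (le_antisymm h h')⟩
  letI : IsTotal α (fun x y : α => key x ≤ key y) := ⟨fun _ _ => le_total _ _⟩
  exact Finset.pairwise_sort _ _

theorem ksort_nodup (key : α → ℚ) (hinj : Injective key) (X : Finset α) :
    (ksort key hinj X).Nodup := by
  unfold ksort
  letI : DecidableRel (fun x y : α => key x ≤ key y) :=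
    fun x y => inferInstanceAs (Decidable (key x ≤ key y))
  letI : IsTrans α (fun x y : α => key x ≤ key y) := ⟨fun _ _ _ h h' => le_trans h h'⟩
  letI : IsAntisymm α (fun x y : α => key x ≤ key y) :=
    ⟨fun _ _ h h' => hinj (le_antisymm h h')⟩
  letI : IsTotal α (fun x y : α => key x ≤ key y) := ⟨fun _ _ => le_total _ _⟩
  exact Finset.sort_nodup _ _

theorem mem_ksort {key : α → ℚ} {hinj : Injective key} {X : Finset α} {x : α} :
    x ∈ ksort key hinj X ↔ x ∈ X := by
  rw [(ksort_perm key hinj X).mem_iff, Finset.mem_toList]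

theorem length_ksort (key : α → ℚ) (hinj : Injective key) (X : Finset α) :
    (ksort key hinj X).length = X.card := by
  rw [(ksort_perm key hinj X).length_eq, Finset.length_toList]

theorem ksort_eq (key : α → ℚ) (hinj : Injective key) (X : Finset α) (l : List α)
    (hperm : l.Perm X.toList) (hsort : l.Pairwise (fun x y => key x ≤ key y)) :
    ksort key hinj X = l := by
  haveI : IsAntisymm α (fun x y : α => key x ≤ key y) :=
    ⟨fun _ _ h h' => hinj (le_antisymm h h')⟩
  exact List.Perm.eq_of_pairwise' (ksort_pairwise key hinj X) hsort
    ((ksort_perm key hinj X).trans hperm.symm)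

theorem ksort_congr {key key' : α → ℚ} {hinj : Injective key} {hinj' : Injective key'}
    {X : Finset α} (h : ∀ x ∈ X, key' x = key x) :
    ksort key' hinj' X = ksort key hinj X := by
  apply ksort_eq
  · exact ksort_perm _ _ _
  · refine ((ksort_pairwise key hinj X).imp_of_mem ?_)
    intro a b ha hb hab
    rw [h a (mem_ksort.mp ha), h b (mem_ksort.mp hb)]
    exact hab

/-- strict pairwise -/
theorem ksort_pairwise_lt (key : α → ℚ) (hinj : Injective key) (X : Finset α) :
    (ksort key hinj X).Pairwise (fun x y => key x < key y) := by
  have h1 := ksort_pairwise key hinj X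
  have h2 := (ksort_nodup key hinj X)
  refine (h1.and h2).imp ?_
  rintro a b ⟨hle, hne⟩
  exact lt_of_le_of_ne hle (fun h => hne (hinj h))

theorem ksort_insert (key : α → ℚ) (hinj : Injective key) (X : Finset α) [DecidableEq α]
    (z : α) (hz : z ∉ X) (p : ℕ) (hp : p ≤ X.card)
    (hlt : ∀ x ∈ (ksort key hinj X).take p, key x < key z)
    (hgt : ∀ x ∈ (ksort key hinj X).drop p, key z < key x) :
    ksort key hinj (insert z X) = (ksort key hinj X).insertIdx p z := by
  set l := ksort key hinj X with hl
  have hlen : p ≤ l.length := by rw [hl, length_ksort]; exact hp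
  apply ksort_eq
  · exact (List.perm_insertIdx z l hlen).trans
      ((List.Perm.cons z (ksort_perm key hinj X)).trans (Finset.toList_insert hz).symm)
  · rw [insertIdx_eq_take_cons_drop' z p l hlen]
    rw [List.pairwise_append]
    refine ⟨List.Pairwise.sublist (List.take_sublist p l) (ksort_pairwise key hinj X), ?_, ?_⟩
    · rw [List.pairwise_cons]
      refine ⟨fun y hy => (hgt y hy).le, List.Pairwise.sublist (List.drop_sublist p l) (ksort_pairwise key hinj X)⟩
    · intro x hx y hy
      rcases List.mem_cons.mp hy with rfl | hy'
      · exact (hlt x hx).le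
      · exact ((hlt x hx).trans (hgt y hy')).le

end KSort

section Gap

variable {α : Type*}

theorem exists_gap (key : α → ℚ) (hinj : Function.Injective key) (X : Finset α) (p : ℕ)
    (D : Set ℚ) (hD : D.Finite) :
    ∃ q : ℚ, q ∉ D ∧ (∀ x ∈ (ksort key hinj X).take p, key x < q) ∧
      (∀ x ∈ (ksort key hinj X).drop p, q < key x) := by
  set l := ksort key hinj X with hl
  set A : Set ℚ := {q | (∀ x ∈ l.take p, key x < q) ∧ (∀ x ∈ l.drop p, q < key x)} with hA
  suffices hinf : A.Infinite by
    obtain ⟨q, hq⟩ := (hinf.diff hD).nonempty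
    exact ⟨q, hq.2, hq.1.1, hq.1.2⟩
  have hcross : ∀ x ∈ l.take p, ∀ y ∈ l.drop p, key x < key y := by
    have := ksort_pairwise_lt key hinj X
    rw [← hl, ← List.take_append_drop p l, List.pairwise_append] at this
    exact this.2.2
  by_cases h1 : l.take p = []
  · by_cases h2 : l.drop p = []
    · refine Set.infinite_univ.mono ?_
      intro q _
      exact ⟨fun x hx => by rw [h1] at hx; simp at hx,
             fun x hx => by rw [h2] at hx; simp at hx⟩
    · obtain ⟨y0, hy0⟩ := List.exists_mem_of_ne_nil _ h2
      have hne : ((l.drop p).map key).toFinset.Nonempty :=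
        ⟨key y0, List.mem_toFinset.mpr (List.mem_map_of_mem (f := key) hy0)⟩
      set b := ((l.drop p).map key).toFinset.min' hne with hb
      refine (Set.Iio_infinite b).mono ?_
      intro q hq
      refine ⟨fun x hx => by rw [h1] at hx; simp at hx, fun x hx => ?_⟩
      exact lt_of_lt_of_le hq (Finset.min'_le _ _
        (List.mem_toFinset.mpr (List.mem_map_of_mem (f := key) hx)))
  · obtain ⟨x0, hx0⟩ := List.exists_mem_of_ne_nil _ h1
    have hneT : ((l.take p).map key).toFinset.Nonempty :=
      ⟨key x0, List.mem_toFinset.mpr (List.mem_map_of_mem (f := key) hx0)⟩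
    set a := ((l.take p).map key).toFinset.max' hneT with ha
    have haub : ∀ x ∈ l.take p, key x ≤ a := fun x hx =>
      Finset.le_max' _ _ (List.mem_toFinset.mpr (List.mem_map_of_mem (f := key) hx))
    obtain ⟨xa, hxa, hxakey⟩ : ∃ xa ∈ l.take p, key xa = a := by
      have hmem := Finset.max'_mem _ hneT
      rw [List.mem_toFinset, List.mem_map] at hmem
      obtain ⟨xa, hxa, hk⟩ := hmem
      exact ⟨xa, hxa, hk⟩
    by_cases h2 : l.drop p = []
    · refine (Set.Ioi_infinite a).mono ?_
      intro q hq
      exact ⟨fun x hx => lt_of_le_of_lt (haub x hx) hq,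
             fun x hx => by rw [h2] at hx; simp at hx⟩
    · obtain ⟨y0, hy0⟩ := List.exists_mem_of_ne_nil _ h2
      have hne : ((l.drop p).map key).toFinset.Nonempty :=
        ⟨key y0, List.mem_toFinset.mpr (List.mem_map_of_mem (f := key) hy0)⟩
      set b := ((l.drop p).map key).toFinset.min' hne with hb
      have hblb : ∀ x ∈ l.drop p, b ≤ key x := fun x hx =>
        Finset.min'_le _ _ (List.mem_toFinset.mpr (List.mem_map_of_mem (f := key) hx))
      obtain ⟨yb, hyb, hybkey⟩ : ∃ yb ∈ l.drop p, key yb = b := by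
        have hmem := Finset.min'_mem _ hne
        rw [List.mem_toFinset, List.mem_map] at hmem
        obtain ⟨yb, hyb, hk⟩ := hmem
        exact ⟨yb, hyb, hk⟩
      have hab : a < b := by
        rw [← hxakey, ← hybkey]; exact hcross _ hxa _ hyb
      have hIoo : (Set.Ioo a b).Infinite := Set.infinite_coe_iff.mp (Set.Ioo.infinite hab)
      refine hIoo.mono ?_
      intro q hq
      exact ⟨fun x hx => lt_of_le_of_lt (haub x hx) hq.1,
             fun x hx => lt_of_lt_of_le hq.2 (hblb x hx)⟩

end Gap

section Count

variable {β : Type*} [DecidableEq β]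

omit [DecidableEq β] in
theorem insertIdx_getElem?_self (l : List β) (t : β) (p : ℕ) (hp : p ≤ l.length) :
    (l.insertIdx p t)[p]? = some t := by
  have hlen : (l.insertIdx p t).length = l.length + 1 := List.length_insertIdx_of_le_length hp t
  rw [List.getElem?_eq_getElem (by omega)]
  rw [List.getElem_insertIdx_self (l := l) (x := t) (i := p) (by omega)]

omit [DecidableEq β] in
theorem insertIdx_getElem?_lt (l : List β) (t : β) (p q : ℕ) (hpq : p < q) (hp : p < l.length) :
    (l.insertIdx q t)[p]? = l[p]? := by
  rw [List.getElem?_eq_getElem hp,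
    List.getElem?_eq_getElem (lt_of_lt_of_le hp (List.length_le_length_insertIdx (l := l) (x := t) (i := q)))]
  rw [List.getElem_insertIdx_of_lt (l := l) (x := t) hpq (lt_of_lt_of_le hp List.length_le_length_insertIdx)]

theorem exists_insertIdx_not_mem (l : List β) (a b : β) (hab : a ≠ b)
    (F : Finset (List β)) (hF : F.card ≤ l.length) :
    ∃ p t, p ≤ l.length ∧ (t = a ∨ t = b) ∧ l.insertIdx p t ∉ F := by
  by_contra hcon
  push_neg at hcon
  set val : Bool → β := fun c => if c then a else b with hval
  have hvala : val true = a := rfl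
  have hvalb : val false = b := rfl
  have hvalinj : Function.Injective val := by
    intro c d h
    cases c <;> cases d <;> first | rfl | (exfalso; simp [hval] at h; tauto)
  set g : ℕ × Bool → List β := fun pc => l.insertIdx pc.1 (val pc.2) with hg
  set good : Finset (ℕ × Bool) :=
    ((Finset.range (l.length + 1)) ×ˢ (Finset.univ : Finset Bool)).filter
      (fun pc => l[pc.1]? ≠ some (val pc.2)) with hgood
  have hmemgood : ∀ pc ∈ good, pc.1 ≤ l.length ∧ l[pc.1]? ≠ some (val pc.2) := by
    intro pc hpc
    rw [hgood, Finset.mem_filter, Finset.mem_product, Finset.mem_range] at hpc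
    exact ⟨by omega, hpc.2⟩
  have hginF : ∀ pc ∈ good, g pc ∈ F := by
    intro pc hpc
    refine hcon pc.1 (val pc.2) (hmemgood pc hpc).1 ?_
    cases hc : pc.2
    · right; rw [hvalb]
    · left; rw [hvala]
  have hkey : ∀ pc ∈ good, ∀ qd ∈ good, pc.1 < qd.1 → g pc ≠ g qd := by
    intro pc hpc qd hqd hlt heq
    have h1 : (g pc)[pc.1]? = some (val pc.2) :=
      insertIdx_getElem?_self l (val pc.2) pc.1 (hmemgood pc hpc).1
    have h2 : (g qd)[pc.1]? = l[pc.1]? :=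
      insertIdx_getElem?_lt l (val qd.2) pc.1 qd.1 hlt
        (lt_of_lt_of_le hlt (hmemgood qd hqd).1)
    rw [heq, h2] at h1
    exact (hmemgood pc hpc).2 h1
  have hinjOn : Set.InjOn g ↑good := by
    intro pc hpc' qd hqd' heq
    rw [Finset.mem_coe] at hpc' hqd'
    have hvaleq : val pc.2 = val qd.2 := by
      by_contra hne
      have p1 : (g pc).Perm (val pc.2 :: l) := List.perm_insertIdx _ _ (hmemgood pc hpc').1
      have p2 : (g qd).Perm (val qd.2 :: l) := List.perm_insertIdx _ _ (hmemgood qd hqd').1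
      have hc : (val pc.2 :: l).count (val pc.2) = (val qd.2 :: l).count (val pc.2) := by
        rw [← p1.count_eq, ← p2.count_eq, heq]
      simp [List.count_cons, hne, Ne.symm hne] at hc
    have h2 : pc.2 = qd.2 := hvalinj hvaleq
    have h1 : pc.1 = qd.1 := by
      rcases lt_trichotomy pc.1 qd.1 with h | h | h
      · exact absurd heq (hkey pc hpc' qd hqd' h)
      · exact h
      · exact absurd heq.symm (hkey qd hqd' pc hpc' h)
    exact Prod.ext h1 h2
  have hfst : ∀ r : ℕ, ((if l[r]? = some a then ((r, false) : ℕ × Bool) else (r, true))).1 = r := by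
    intro r; by_cases h : l[r]? = some a <;> simp [h]
  have hcard1 : l.length + 1 ≤ good.card := by
    have hle : (Finset.range (l.length + 1)).card ≤ good.card := by
      apply Finset.card_le_card_of_injOn
        (fun p => if l[p]? = some a then ((p, false) : ℕ × Bool) else (p, true))
      · intro p hp
        simp only [Finset.mem_coe] at hp ⊢
        rw [Finset.mem_range] at hp
        by_cases h : l[p]? = some a
        · simp only [h, if_true]
          rw [hgood, Finset.mem_filter, Finset.mem_product, Finset.mem_range]
          refine ⟨⟨hp, Finset.mem_univ _⟩, ?_⟩
          rw [hvalb, h]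
          simp [hab]
        · simp only [h, if_false]
          rw [hgood, Finset.mem_filter, Finset.mem_product, Finset.mem_range]
          refine ⟨⟨hp, Finset.mem_univ _⟩, ?_⟩
          rw [hvala]
          exact h
      · intro p _ q _ heq
        have := congrArg Prod.fst heq
        rwa [hfst p, hfst q] at this
    simpa using hle
  have hcard2 : good.card ≤ F.card := by
    rw [← Finset.card_image_of_injOn hinjOn]
    apply Finset.card_le_card
    intro x hx
    rw [Finset.mem_image] at hx
    obtain ⟨pc, hpc, rfl⟩ := hx
    exact hginF pc hpc
  omega

end Count

open Finset

section Graph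

variable {V : Type*} [Fintype V] [DecidableEq V]

/-- The finset of elements of `V ⊕ E(G)` relevant to a vertex `v`. -/
noncomputable def relSet (G : SimpleGraph V) [DecidableRel G.Adj] (v : V) :
    Finset (V ⊕ G.edgeSet) :=
  letI : DecidablePred (fun x : V ⊕ G.edgeSet =>
      Sum.elim (fun u : V => u = v) (fun e : G.edgeSet => v ∈ (e : Sym2 V)) x) :=
    Classical.decPred _
  ((Finset.univ : Finset (V ⊕ G.edgeSet)).filter
    (fun x : V ⊕ G.edgeSet =>
      Sum.elim (fun u : V => u = v) (fun e : G.edgeSet => v ∈ (e : Sym2 V)) x))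

variable {G : SimpleGraph V} [DecidableRel G.Adj]

theorem mem_relSet {v : V} {x : V ⊕ G.edgeSet} :
    x ∈ relSet G v ↔ Sum.elim (fun u : V => u = v) (fun e : G.edgeSet => v ∈ (e : Sym2 V)) x := by
  classical
  rw [relSet]
  rw [Finset.mem_filter]
  simp

theorem inl_mem_relSet {v u : V} : (Sum.inl u : V ⊕ G.edgeSet) ∈ relSet G v ↔ u = v := by
  rw [mem_relSet]; rfl

theorem inr_mem_relSet {v : V} {e : G.edgeSet} :
    (Sum.inr e : V ⊕ G.edgeSet) ∈ relSet G v ↔ v ∈ (e : Sym2 V) := by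
  rw [mem_relSet]; rfl

theorem degree_le_erase_card (v0 : V) :
    ((Finset.univ : Finset V).filter (fun u => G.Adj v0 u)).card ≤
      ((relSet G v0).erase (Sum.inl v0)).card := by
  classical
  apply Finset.card_le_card_of_injOn
    (fun u => if h : G.Adj v0 u then (Sum.inr ⟨s(v0, u), h⟩ : V ⊕ G.edgeSet) else Sum.inl u)
  · intro u hu
    rw [Finset.mem_coe, Finset.mem_filter] at hu
    simp only [Finset.mem_coe]
    rw [dif_pos hu.2]
    rw [Finset.mem_erase]
    refine ⟨by simp, ?_⟩
    rw [inr_mem_relSet]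
    exact Sym2.mem_mk_left v0 u
  · intro u hu u' hu' heq
    rw [Finset.mem_coe, Finset.mem_filter] at hu hu'
    simp only [dif_pos hu.2, dif_pos hu'.2] at heq
    exact Sym2.congr_right.mp (congrArg Subtype.val (Sum.inr.inj heq))

theorem main_invariant (G : SimpleGraph V) [DecidableRel G.Adj]
    (L : V ⊕ G.edgeSet → Finset ℝ) (hL : ∀ x, (L x).card = 2) (s : Finset V) :
    ∃ (key : V ⊕ G.edgeSet → ℚ) (hinj : Function.Injective key) (w : V ⊕ G.edgeSet → ℝ),
      (∀ x, w x ∈ L x) ∧ ∀ u ∈ s, ∀ v ∈ s, G.Adj u v →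
        (ksort key hinj (relSet G u)).map w ≠ (ksort key hinj (relSet G v)).map w := by
  classical
  induction s using Finset.induction_on with
  | empty =>
    have hkey0 : Function.Injective
        (fun x : V ⊕ G.edgeSet => (((Fintype.equivFin (V ⊕ G.edgeSet)) x : ℕ) : ℚ)) := by
      intro x y h
      apply (Fintype.equivFin (V ⊕ G.edgeSet)).injective
      exact Fin.val_injective (Nat.cast_injective h)
    have hex : ∀ x : V ⊕ G.edgeSet, ∃ t, t ∈ L x := by
      intro x
      exact Finset.card_pos.mp (by rw [hL x]; norm_num)
    choose w0 hw0 using hex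
    exact ⟨_, hkey0, w0, hw0, by simp⟩
  | @insert v0 s hv0 ih =>
    obtain ⟨key, hinj, w, hw, hproper⟩ := ih
    set E0 : Finset (V ⊕ G.edgeSet) := (relSet G v0).erase (Sum.inl v0) with hE0
    have hinlmem : (Sum.inl v0 : V ⊕ G.edgeSet) ∈ relSet G v0 := inl_mem_relSet.mpr rfl
    have hins : insert (Sum.inl v0) E0 = relSet G v0 := Finset.insert_erase hinlmem
    set l : List (V ⊕ G.edgeSet) := ksort key hinj E0 with hldef
    set lw : List ℝ := l.map w with hlwdef
    have hllen : l.length = E0.card := length_ksort key hinj E0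
    have hlwlen : lw.length = E0.card := by rw [hlwdef, List.length_map, hllen]
    set F : Finset (List ℝ) :=
      (s.filter (fun u => G.Adj v0 u)).image
        (fun u => (ksort key hinj (relSet G u)).map w) with hFdef
    have hFle : F.card ≤ lw.length := by
      rw [hlwlen]
      calc F.card ≤ (s.filter (fun u => G.Adj v0 u)).card := Finset.card_image_le
        _ ≤ ((Finset.univ : Finset V).filter (fun u => G.Adj v0 u)).card :=
            Finset.card_le_card (Finset.filter_subset_filter _ (Finset.subset_univ s))
        _ ≤ E0.card := degree_le_erase_card v0
    obtain ⟨a, b, hab, hLab⟩ := Finset.card_eq_two.mp (hL (Sum.inl v0))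
    obtain ⟨p, t, hp, htab, hnotF⟩ := exists_insertIdx_not_mem lw a b hab F hFle
    have hpE : p ≤ E0.card := by rwa [hlwlen] at hp
    have hpl : p ≤ l.length := by rwa [hllen]
    obtain ⟨q, hqD, hlt, hgt⟩ :=
      exists_gap key hinj E0 p (Set.range key) (Set.finite_range key)
    set key' := Function.update key (Sum.inl v0) q with hkey'
    have hinj' : Function.Injective key' := by
      intro x y h
      by_cases hx : x = Sum.inl v0 <;> by_cases hy : y = Sum.inl v0
      · rw [hx, hy]
      · exfalso
        rw [hkey', hx] at h
        rw [Function.update_self, Function.update_of_ne hy] at h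
        exact hqD ⟨y, h.symm⟩
      · exfalso
        rw [hkey', hy] at h
        rw [Function.update_self, Function.update_of_ne hx] at h
        exact hqD ⟨x, h⟩
      · rw [hkey', Function.update_of_ne hx, Function.update_of_ne hy] at h
        exact hinj h
    set w' := Function.update w (Sum.inl v0) t with hw'def
    have hw' : ∀ x, w' x ∈ L x := by
      intro x
      by_cases hx : x = Sum.inl v0
      · rw [hw'def, hx, Function.update_self, hLab]
        rcases htab with rfl | rfl
        · exact Finset.mem_insert_self _ _
        · exact Finset.mem_insert_of_mem (Finset.mem_singleton_self _)
      · rw [hw'def, Function.update_of_ne hx]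
        exact hw x
    have hkeyE0 : ∀ x ∈ E0, key' x = key x := by
      intro x hx
      have : x ≠ Sum.inl v0 := Finset.ne_of_mem_erase hx
      rw [hkey', Function.update_of_ne this]
    have hsortE0 : ksort key' hinj' E0 = l := ksort_congr hkeyE0
    -- sequences of old vertices unchanged
    have hold : ∀ u ∈ s,
        (ksort key' hinj' (relSet G u)).map w' = (ksort key hinj (relSet G u)).map w := by
      intro u hu
      have hne : ∀ x ∈ relSet G u, x ≠ Sum.inl v0 := by
        intro x hx hxeq
        rw [hxeq, inl_mem_relSet] at hx
        exact hv0 (hx ▸ hu)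
      rw [ksort_congr (hinj := hinj) (fun x hx => by rw [hkey', Function.update_of_ne (hne x hx)])]
      apply List.map_congr_left
      intro x hx
      rw [hw'def, Function.update_of_ne (hne x (mem_ksort.mp hx))]
    -- the sequence of v0
    have hseqv0 : (ksort key' hinj' (relSet G v0)).map w' = lw.insertIdx p t := by
      have hzE0 : (Sum.inl v0 : V ⊕ G.edgeSet) ∉ E0 := Finset.notMem_erase _ _
      have hlt' : ∀ x ∈ (ksort key' hinj' E0).take p, key' x < key' (Sum.inl v0) := by
        intro x hx
        rw [hsortE0] at hx
        have hxE0 : x ∈ E0 := mem_ksort.mp ((List.take_sublist p l).subset hx)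
        rw [hkeyE0 x hxE0, hkey', Function.update_self]
        exact hlt x hx
      have hgt' : ∀ x ∈ (ksort key' hinj' E0).drop p, key' (Sum.inl v0) < key' x := by
        intro x hx
        rw [hsortE0] at hx
        have hxE0 : x ∈ E0 := mem_ksort.mp ((List.drop_sublist p l).subset hx)
        rw [hkeyE0 x hxE0, hkey', Function.update_self]
        exact hgt x hx
      have h1 : ksort key' hinj' (relSet G v0) = l.insertIdx p (Sum.inl v0) := by
        rw [← hins, ksort_insert key' hinj' E0 (Sum.inl v0) hzE0 p hpE hlt' hgt', hsortE0]
      rw [h1, map_insertIdx' w' (Sum.inl v0) p l hpl]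
      congr 1
      · rw [hlwdef]
        apply List.map_congr_left
        intro x hx
        have hxne : x ≠ Sum.inl v0 := fun hxx => (Finset.notMem_erase _ _) (hxx ▸ mem_ksort.mp hx)
        exact Function.update_of_ne hxne _ _
      · exact Function.update_self _ _ _
    refine ⟨key', hinj', w', hw', ?_⟩
    intro u hu v hv hadj
    rcases Finset.mem_insert.mp hu with rfl | hu' <;>
      rcases Finset.mem_insert.mp hv with rfl | hv'
    · exact absurd hadj (G.irrefl)
    · rw [hseqv0, hold v hv']
      intro hcon
      apply hnotF
      rw [hcon, hFdef]
      exact Finset.mem_image_of_mem _ (Finset.mem_filter.mpr ⟨hv', hadj⟩)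
    · rw [hseqv0, hold u hu']
      intro hcon
      apply hnotF
      rw [← hcon, hFdef]
      exact Finset.mem_image_of_mem _ (Finset.mem_filter.mpr ⟨hu', hadj.symm⟩)
    · rw [hold u hu', hold v hv']
      exact hproper u hu' v hv' hadj

end Graph

/-- For every graph `G`, `ch_{σ*}^t(G) ≤ 2`: for every assignment of two-element sets of
reals to the vertices and edges, there exist a linear order on `V(G) ⊕ E(G)` and a total
weighting from the sets whose induced total sequence colouring is proper. -/
theorem stmt_3 [Fintype V] [DecidableEq V] (G : SimpleGraph V) [DecidableRel G.Adj]
    (L : V ⊕ G.edgeSet → Finset ℝ) (hL : ∀ x, (L x).card = 2) :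
    ∃ (σ : LinearOrder (V ⊕ G.edgeSet)) (w : V ⊕ G.edgeSet → ℝ),
      (∀ x, w x ∈ L x) ∧ ProperTotalSeq G σ w := by
  classical
  obtain ⟨key, hinj, w, hw, hproper⟩ := main_invariant G L hL Finset.univ
  refine ⟨LinearOrder.lift' key hinj, w, hw, ?_⟩
  intro u v hadj
  have hbridge : ∀ x : V, totalSeqColor G (LinearOrder.lift' key hinj) w x =
      (ksort key hinj (relSet G x)).map w := by
    intro x
    rfl
  rw [hbridge u, hbridge v]
  exact hproper u (Finset.mem_univ u) v (Finset.mem_univ v) hadj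
end

section
/- If G is a nice finite simple graph, then χ_σ^e(G) ≤ 4: for every linear order on E(G) there exists an edge weighting w : E(G) → {1,2,3,4} whose induced sequence colouring of the vertices is proper. -/
/-!
Common definitions: sequence colourings induced by an edge weighting and a linear
order on the edge set of a finite simple graph.
-/

open Finset

variable {V : Type*}

/-- A graph is nice if no connected component is isomorphic to `K₂`; equivalently,
no edge has both of its endpoints of degree `1`. -/
def Nice [Fintype V] [DecidableEq V] (G : SimpleGraph V) [DecidableRel G.Adj] : Prop :=
  ∀ u v : V, G.Adj u v → 2 ≤ G.degree u ∨ 2 ≤ G.degree v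


/-! ### Auxiliary machinery -/

set_option linter.unusedSectionVars false

section ListLemmas
variable {α : Type*} [LinearOrder α]

theorem sortedA : ∀ {l : List α}, l.Pairwise (· < ·) → ∀ {e : α}, e ∈ l →
    ∀ {p : α → Bool}, (∀ b, p b = true ↔ b < e) → l[l.countP p]? = some e := by
  intro l
  induction l with
  | nil => simp
  | cons a t ih =>
    intro hs e he p hp
    rw [List.pairwise_cons] at hs
    rcases List.mem_cons.1 he with rfl | ht
    · have h0 : (e :: t).countP p = 0 := by
        rw [List.countP_eq_zero]
        intro x hx
        rcases List.mem_cons.1 hx with rfl | hx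
        · simp [hp, lt_irrefl]
        · simp [hp, not_lt.2 (le_of_lt (hs.1 x hx))]
      rw [h0, List.getElem?_cons_zero]
    · have ha : a < e := hs.1 e ht
      have hc : (a :: t).countP p = t.countP p + 1 := by
        rw [List.countP_cons_of_pos ((hp a).2 ha)]
      rw [hc, List.getElem?_cons_succ]
      exact ih hs.2 ht hp

theorem sortedB : ∀ {l : List α}, l.Pairwise (· < ·) → ∀ {k : ℕ} {b : α}, l[k]? = some b →
    ∀ {p : α → Bool}, (∀ x, p x = true ↔ x < b) → l.countP p = k := by
  intro l
  induction l with
  | nil => simp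
  | cons a t ih =>
    intro hs k b hk p hp
    rw [List.pairwise_cons] at hs
    cases k with
    | zero =>
      simp only [List.getElem?_cons_zero, Option.some.injEq] at hk
      subst hk
      rw [List.countP_eq_zero]
      intro x hx
      rcases List.mem_cons.1 hx with rfl | hx
      · simp [hp, lt_irrefl]
      · simp [hp, not_lt.2 (le_of_lt (hs.1 x hx))]
    | succ k =>
      rw [List.getElem?_cons_succ] at hk
      have hb : b ∈ t := List.mem_of_getElem? hk
      have hab : a < b := hs.1 b hb
      rw [List.countP_cons_of_pos ((hp a).2 hab), ih hs.2 hk hp]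

end ListLemmas

section Rank
variable [Fintype V] [DecidableEq V] (G : SimpleGraph V) [DecidableRel G.Adj]
  (σ : LinearOrder G.edgeSet)

noncomputable def rk (u : V) (e : G.edgeSet) : ℕ :=
  (incEdges G σ u).countP (fun b => @decide (σ.lt b e) (σ.toDecidableLT b e))

variable {G σ}

lemma mem_incEdges {u : V} {e : G.edgeSet} : e ∈ incEdges G σ u ↔ u ∈ (e : Sym2 V) := by
  letI := σ
  unfold incEdges
  rw [Finset.mem_sort, Finset.mem_filter]
  simp

lemma sorted_incEdges (u : V) : (incEdges G σ u).Pairwise σ.lt := by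
  letI := σ
  exact ((Finset.pairwise_sort _ _).and (Finset.sort_nodup _ _)).imp
    (fun h => @lt_of_le_of_ne _ σ.toPartialOrder _ _ h.1 h.2)

lemma rk_getElem? {u : V} {e : G.edgeSet} (h : u ∈ (e : Sym2 V)) :
    (incEdges G σ u)[rk G σ u e]? = some e := by
  letI := σ
  exact sortedA (sorted_incEdges u) (mem_incEdges.2 h) (fun b => by simp)

lemma rk_of_getElem? {u : V} {k : ℕ} {b : G.edgeSet} (h : (incEdges G σ u)[k]? = some b) :
    rk G σ u b = k ∧ u ∈ (b : Sym2 V) := by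
  letI := σ
  exact ⟨sortedB (sorted_incEdges u) h (fun x => by simp), mem_incEdges.1 (List.mem_of_getElem? h)⟩

lemma rk_lt_len {u : V} {e : G.edgeSet} (h : u ∈ (e : Sym2 V)) :
    rk G σ u e < (incEdges G σ u).length := by
  have := rk_getElem? (σ := σ) h
  exact (List.getElem?_eq_some_iff.1 this).1

lemma rk_inj {u : V} {a b : G.edgeSet} (ha : u ∈ (a : Sym2 V)) (hb : u ∈ (b : Sym2 V))
    (h : rk G σ u a = rk G σ u b) : a = b := by
  have h1 := rk_getElem? (σ := σ) ha
  have h2 := rk_getElem? (σ := σ) hb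
  rw [h] at h1
  exact Option.some.inj (h1.symm.trans h2)

lemma exists_rk {u : V} {k : ℕ} (h : k < (incEdges G σ u).length) :
    ∃ b : G.edgeSet, u ∈ (b : Sym2 V) ∧ rk G σ u b = k := by
  have : (incEdges G σ u)[k]? = some ((incEdges G σ u)[k]'h) := List.getElem?_eq_getElem h
  obtain ⟨h1, h2⟩ := rk_of_getElem? this
  exact ⟨_, h2, h1⟩

lemma lt_of_rk_lt {u : V} {a b : G.edgeSet} (ha : u ∈ (a : Sym2 V)) (hb : u ∈ (b : Sym2 V))
    (h : rk G σ u a < rk G σ u b) : σ.lt a b := by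
  letI := σ
  obtain ⟨hla, hga⟩ := List.getElem?_eq_some_iff.1 (rk_getElem? (σ := σ) ha)
  obtain ⟨hlb, hgb⟩ := List.getElem?_eq_some_iff.1 (rk_getElem? (σ := σ) hb)
  have := (sorted_incEdges (G := G) (σ := σ) u).rel_get_of_lt
    (a := ⟨_, hla⟩) (b := ⟨_, hlb⟩) h
  simpa [List.get_eq_getElem, hga, hgb] using this

lemma len_incEdges {u : V} : (incEdges G σ u).length = G.degree u := by
  letI := σ
  unfold incEdges
  rw [Finset.length_sort, ← SimpleGraph.card_incidenceFinset_eq_degree]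
  refine Finset.card_bij (fun e _ => (e : Sym2 V)) ?_ ?_ ?_
  · intro e he
    rw [SimpleGraph.mem_incidenceFinset]
    exact ⟨e.2, (Finset.mem_filter.1 he).2⟩
  · intro a ha b hb hab
    exact Subtype.ext hab
  · intro g hg
    rw [SimpleGraph.mem_incidenceFinset] at hg
    exact ⟨⟨g, hg.1⟩, Finset.mem_filter.2 ⟨Finset.mem_univ _, hg.2⟩, rfl⟩

end Rank

section Core
variable [Fintype V] [DecidableEq V] (G : SimpleGraph V) [DecidableRel G.Adj]
  (σ : LinearOrder G.edgeSet)

def GE {u v : V} (h : G.Adj u v) : G.edgeSet := ⟨s(u, v), (SimpleGraph.mem_edgeSet G).2 h⟩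

noncomputable def K (u v : V) : ℕ :=
  if h : G.Adj u v then
    (if rk G σ u (GE G h) ≠ rk G σ v (GE G h)
      then max (rk G σ u (GE G h)) (rk G σ v (GE G h))
      else if rk G σ u (GE G h) = 0 then (incEdges G σ u).length - 1
      else rk G σ u (GE G h) - 1)
  else 0

variable {G}

lemma K_eq {u v : V} (h : G.Adj u v) :
    K G σ u v = (if rk G σ u (GE G h) ≠ rk G σ v (GE G h)
      then max (rk G σ u (GE G h)) (rk G σ v (GE G h))
      else if rk G σ u (GE G h) = 0 then (incEdges G σ u).length - 1
      else rk G σ u (GE G h) - 1) := dif_pos h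

/-- a witness structure for the charge relation -/
def W (f : G.edgeSet) (u v : V) (b : G.edgeSet) : Prop :=
  G.Adj u v ∧ u ∈ (f : Sym2 V) ∧ v ∈ (b : Sym2 V) ∧
    rk G σ u f = K G σ u v ∧ rk G σ v b = K G σ u v ∧ σ.lt f b

/-- the charge relation: edge `f` is responsible for breaking a constraint whose
designated pair is `(f, b)` with `f ≺ b`. -/
def Q (f b : G.edgeSet) : Prop := ∃ u v, W σ f u v b

variable {σ}

lemma mem_GE_left {u v : V} (h : G.Adj u v) : u ∈ ((GE G h : G.edgeSet) : Sym2 V) :=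
  Sym2.mem_mk_left u v

lemma mem_GE_right {u v : V} (h : G.Adj u v) : v ∈ ((GE G h : G.edgeSet) : Sym2 V) :=
  Sym2.mem_mk_right u v

lemma self_aux {f b : G.edgeSet} {u v : V} (hW : W σ f u v b)
    (hself : s(u, v) = (f : Sym2 V)) :
    rk G σ v f < rk G σ u f ∧ v ∈ (f : Sym2 V) ∧ rk G σ v b = rk G σ u f := by
  letI := σ
  obtain ⟨hadj, huf, hvb, hKf, hKb, hlt⟩ := hW
  have hef : GE G hadj = f := Subtype.ext hself
  have hvf : v ∈ (f : Sym2 V) := by rw [← hself]; exact Sym2.mem_mk_right u v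
  have hK : K G σ u v = (if rk G σ u f ≠ rk G σ v f
      then max (rk G σ u f) (rk G σ v f)
      else if rk G σ u f = 0 then (incEdges G σ u).length - 1
      else rk G σ u f - 1) := by rw [K_eq σ hadj, hef]
  rw [hK] at hKf hKb
  by_cases hpq : rk G σ u f = rk G σ v f
  · exfalso
    rw [if_neg (by simpa using hpq)] at hKf hKb
    by_cases hp0 : rk G σ u f = 0
    · rw [if_pos hp0] at hKf hKb
      have hb : b = f := by
        apply rk_inj hvb hvf
        rw [hKb, ← hKf, hp0, ← hpq, hp0]
      rw [hb] at hlt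
      exact @lt_irrefl _ σ.toPreorder f hlt
    · rw [if_neg hp0] at hKf
      omega
  · rw [if_pos hpq] at hKf hKb
    rcases le_total (rk G σ v f) (rk G σ u f) with hle | hle
    · refine ⟨lt_of_le_of_ne hle (fun hc => hpq hc.symm), hvf, ?_⟩
      rw [hKb]
      omega
    · exfalso
      exact hpq (hKf.trans (Nat.max_eq_right hle))

lemma unique_self {f b b' : G.edgeSet} {u v u' v' : V} (hW : W σ f u v b) (hW' : W σ f u' v' b')
    (hs : s(u, v) = (f : Sym2 V)) (hs' : s(u', v') = (f : Sym2 V)) : b = b' := by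
  obtain ⟨h1, hvf, h2⟩ := self_aux hW hs
  obtain ⟨h1', hvf', h2'⟩ := self_aux hW' hs'
  have heq : s(u, v) = s(u', v') := hs.trans hs'.symm
  rcases Sym2.eq_iff.1 heq with ⟨rfl, rfl⟩ | ⟨rfl, rfl⟩
  · exact rk_inj hW.2.2.1 hW'.2.2.1 (h2.trans h2'.symm)
  · omega

lemma al_aux {f b : G.edgeSet} {u v : V} (hW : W σ f u v b)
    (hne : s(u, v) ≠ (f : Sym2 V)) :
    ∃ hadj : G.Adj u v,
      rk G σ u (GE G hadj) =
        (if rk G σ u f = (incEdges G σ u).length - 1 then 0 else rk G σ u f + 1) := by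
  letI := σ
  obtain ⟨hadj, huf, hvb, hKf, hKb, hlt⟩ := hW
  refine ⟨hadj, ?_⟩
  set e := GE G hadj with hedef
  have hef : e ≠ f := fun hc => hne (congrArg Subtype.val hc)
  have hue : u ∈ (e : Sym2 V) := mem_GE_left hadj
  have hve : v ∈ (e : Sym2 V) := mem_GE_right hadj
  rw [K_eq σ hadj, ← hedef] at hKf hKb
  by_cases hpq : rk G σ u e = rk G σ v e
  · rw [if_neg (by simpa using hpq)] at hKf hKb
    by_cases hp0 : rk G σ u e = 0
    · rw [if_pos hp0] at hKf
      rw [if_pos hKf]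
      exact hp0
    · rw [if_neg hp0] at hKf
      have hlt1 : rk G σ u e < (incEdges G σ u).length := rk_lt_len hue
      have hcond : rk G σ u f ≠ (incEdges G σ u).length - 1 := by omega
      rw [if_neg hcond]
      omega
  · exfalso
    rw [if_pos hpq] at hKf hKb
    rcases le_total (rk G σ v e) (rk G σ u e) with hle | hle
    · rw [Nat.max_eq_left hle] at hKf
      exact hef (rk_inj hue huf hKf.symm)
    · rw [Nat.max_eq_right hle] at hKf hKb
      have hbe : b = e := rk_inj hvb hve hKb
      have h1 : rk G σ u e < rk G σ u f := by
        rw [hKf]; exact lt_of_le_of_ne hle (fun hc => hpq hc)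
      have : σ.lt e f := lt_of_rk_lt hue huf h1
      rw [hbe] at hlt
      exact absurd hlt (asymm this)

lemma unique_al {f b b' : G.edgeSet} {u v v' : V} (hW : W σ f u v b) (hW' : W σ f u v' b')
    (hs : s(u, v) ≠ (f : Sym2 V)) (hs' : s(u, v') ≠ (f : Sym2 V)) : b = b' := by
  obtain ⟨hadj, he⟩ := al_aux hW hs
  obtain ⟨hadj', he'⟩ := al_aux hW' hs'
  have hee : GE G hadj = GE G hadj' :=
    rk_inj (mem_GE_left hadj) (mem_GE_left hadj') (he.trans he'.symm)
  have hvv : v = v' := by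
    have := congrArg Subtype.val hee
    exact Sym2.congr_right.1 this
  subst hvv
  have hKK : K G σ u v = K G σ u v := rfl
  exact rk_inj hW.2.2.1 hW'.2.2.1 (hW.2.2.2.2.1.trans hW'.2.2.2.2.1.symm)

lemma sym2rep (z : Sym2 V) : ∃ x y, z = s(x, y) := by
  induction z using Sym2.ind with
  | _ x y => exact ⟨x, y, rfl⟩

lemma bounded (f : G.edgeSet) :
    ∃ b1 b2 b3 : G.edgeSet, ∀ b, Q σ f b → b = b1 ∨ b = b2 ∨ b = b3 := by
  classical
  obtain ⟨x, y, hxy⟩ := sym2rep (f : Sym2 V)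
  refine ⟨(if h : ∃ b, ∃ u v, W σ f u v b ∧ s(u, v) = (f : Sym2 V) then h.choose else f),
    (if h : ∃ b, ∃ v, W σ f x v b ∧ s(x, v) ≠ (f : Sym2 V) then h.choose else f),
    (if h : ∃ b, ∃ v, W σ f y v b ∧ s(y, v) ≠ (f : Sym2 V) then h.choose else f), ?_⟩
  rintro b ⟨u, v, hW⟩
  have hu : u ∈ (f : Sym2 V) := hW.2.1
  by_cases hs : s(u, v) = (f : Sym2 V)
  · left
    have hex : ∃ b, ∃ u v, W σ f u v b ∧ s(u, v) = (f : Sym2 V) := ⟨b, u, v, hW, hs⟩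
    rw [dif_pos hex]
    obtain ⟨u', v', hW', hs'⟩ := hex.choose_spec
    exact unique_self hW hW' hs hs'
  · right
    rcases Sym2.mem_iff.1 (by rw [← hxy]; exact hu) with rfl | rfl
    · left
      have hex : ∃ b, ∃ v, W σ f u v b ∧ s(u, v) ≠ (f : Sym2 V) := ⟨b, v, hW, hs⟩
      rw [dif_pos hex]
      obtain ⟨v', hW', hs'⟩ := hex.choose_spec
      exact unique_al hW hW' hs hs'
    · right
      have hex : ∃ b, ∃ v, W σ f u v b ∧ s(u, v) ≠ (f : Sym2 V) := ⟨b, v, hW, hs⟩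
      rw [dif_pos hex]
      obtain ⟨v', hW', hs'⟩ := hex.choose_spec
      exact unique_al hW hW' hs hs'

lemma Q_lt {f b : G.edgeSet} (h : Q σ f b) : σ.lt f b := by
  obtain ⟨u, v, hW⟩ := h
  exact hW.2.2.2.2.2

lemma cov {u v : V} (hadj : G.Adj u v)
    (hlen : (incEdges G σ u).length = (incEdges G σ v).length)
    (h2 : 2 ≤ (incEdges G σ u).length) :
    ∃ a b : G.edgeSet, u ∈ (a : Sym2 V) ∧ v ∈ (b : Sym2 V) ∧
      rk G σ u a = rk G σ v b ∧ (Q σ a b ∨ Q σ b a) := by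
  letI := σ
  set e := GE G hadj with hedef
  have hue : u ∈ (e : Sym2 V) := mem_GE_left hadj
  have hve : v ∈ (e : Sym2 V) := mem_GE_right hadj
  have hpl := rk_lt_len (σ := σ) hue
  have hql := rk_lt_len (σ := σ) hve
  have hK : K G σ u v = (if rk G σ u e ≠ rk G σ v e
      then max (rk G σ u e) (rk G σ v e)
      else if rk G σ u e = 0 then (incEdges G σ u).length - 1
      else rk G σ u e - 1) := K_eq σ hadj
  have hklt : K G σ u v < (incEdges G σ u).length := by
    rw [hK]
    split_ifs with h1 h2
    · exact max_lt hpl (hlen ▸ hql)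
    · omega
    · omega
  have hklt' : K G σ u v < (incEdges G σ v).length := hlen ▸ hklt
  obtain ⟨a, hua, hka⟩ := exists_rk hklt
  obtain ⟨b, hvb, hkb⟩ := exists_rk hklt'
  have hne : a ≠ b := by
    rintro rfl
    have hav : a = e := Subtype.ext ((Sym2.mem_and_mem_iff (G.ne_of_adj hadj)).1 ⟨hua, hvb⟩)
    rw [hav] at hka hkb
    rw [if_neg (by rw [hka, hkb]; simp)] at hK
    by_cases h0 : rk G σ u e = 0
    · rw [if_pos h0] at hK
      omega
    · rw [if_neg h0] at hK
      omega
  have hKsym : K G σ v u = K G σ u v := by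
    have hGE : GE G hadj.symm = e := Subtype.ext Sym2.eq_swap
    have hK' : K G σ v u = (if rk G σ v e ≠ rk G σ u e
        then max (rk G σ v e) (rk G σ u e)
        else if rk G σ v e = 0 then (incEdges G σ v).length - 1
        else rk G σ v e - 1) := by
      have := K_eq (u := v) (v := u) σ hadj.symm
      rwa [hGE] at this
    by_cases hpq : rk G σ u e = rk G σ v e
    · rw [hK', hK, hpq, hlen]
    · rw [hK', hK, if_pos (show rk G σ v e ≠ rk G σ u e from fun h => hpq h.symm),
        if_pos hpq]
      exact Nat.max_comm _ _
  rcases hne.lt_or_gt with hlt | hlt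
  · exact ⟨a, b, hua, hvb, hka.trans hkb.symm,
      Or.inl ⟨u, v, hadj, hua, hvb, hka, hkb, hlt⟩⟩
  · exact ⟨a, b, hua, hvb, hka.trans hkb.symm,
      Or.inr ⟨v, u, hadj.symm, hvb, hua, hkb.trans hKsym.symm, hka.trans hKsym.symm, hlt⟩⟩


end Core

section Greedy
variable [Fintype V] [DecidableEq V] (G : SimpleGraph V) [DecidableRel G.Adj]
  (σ : LinearOrder G.edgeSet)

noncomputable def partners (f : G.edgeSet) : Finset G.edgeSet :=
  @Finset.filter _ (fun b => Q σ f b) (Classical.decPred _) Finset.univ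

variable {G σ}

lemma mem_partners {f b : G.edgeSet} : b ∈ partners G σ f ↔ Q σ f b := by
  classical
  simp [partners]

lemma card_partners_le (f : G.edgeSet) : (partners G σ f).card ≤ 3 := by
  obtain ⟨b1, b2, b3, h⟩ := bounded (σ := σ) f
  have hsub : partners G σ f ⊆ {b1, b2, b3} := by
    intro b hb
    rcases h b (mem_partners.1 hb) with rfl | rfl | rfl <;> simp
  refine (Finset.card_le_card hsub).trans ?_
  refine (Finset.card_insert_le _ _).trans ?_
  refine Nat.succ_le_succ ?_
  refine (Finset.card_insert_le _ _).trans ?_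
  simp

lemma foursub {S : Finset ℝ} (h : S.card ≤ 3) :
    ((({1, 2, 3, 4} : Finset ℝ)) \ S).Nonempty := by
  rw [← Finset.card_pos]
  have h4 : ({1, 2, 3, 4} : Finset ℝ).card = 4 := by
    rw [show ({1, 2, 3, 4} : Finset ℝ) = insert 1 (insert 2 (insert 3 {4})) from rfl]
    rw [Finset.card_insert_of_notMem (by norm_num),
      Finset.card_insert_of_notMem (by norm_num),
      Finset.card_insert_of_notMem (by norm_num), Finset.card_singleton]
  have := Finset.le_card_sdiff S ({1, 2, 3, 4} : Finset ℝ)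
  omega

variable (G σ)

noncomputable def wstep (f : G.edgeSet) (ih : ∀ b : G.edgeSet, σ.lt f b → ℝ) : ℝ :=
  ((({1, 2, 3, 4} : Finset ℝ)) \
    ((partners G σ f).attach.image (fun b => ih b.1 (Q_lt (mem_partners.1 b.2))))).min'
    (foursub ((Finset.card_image_le).trans (by rw [Finset.card_attach]; exact card_partners_le f)))

lemma sigmaWF : WellFounded (fun b f : G.edgeSet => σ.lt f b) := by
  letI := σ
  haveI : IsTrans G.edgeSet (fun b f : G.edgeSet => σ.lt f b) :=
    ⟨fun a b c h1 h2 => @lt_trans _ σ.toPartialOrder.toPreorder _ _ _ h2 h1⟩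
  haveI : IsIrrefl G.edgeSet (fun b f : G.edgeSet => σ.lt f b) :=
    ⟨fun a h => @lt_irrefl _ σ.toPartialOrder.toPreorder a h⟩
  exact Finite.wellFounded_of_trans_of_irrefl _

noncomputable def wgt : G.edgeSet → ℝ :=
  WellFounded.fix (sigmaWF G σ) (wstep G σ)

lemma wgt_eq (f : G.edgeSet) : wgt G σ f = wstep G σ f (fun b _ => wgt G σ b) :=
  WellFounded.fix_eq _ _ _

variable {G σ}

lemma wgt_mem (f : G.edgeSet) : wgt G σ f ∈ ({1, 2, 3, 4} : Finset ℝ) := by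
  rw [wgt_eq]
  exact (Finset.mem_sdiff.1 (Finset.min'_mem _ _)).1

set_option maxHeartbeats 2000000 in
lemma wgt_ne {f b : G.edgeSet} (h : Q σ f b) : wgt G σ f ≠ wgt G σ b := by
  have hmem : wgt G σ b ∈ (partners G σ f).attach.image (fun x => wgt G σ x.1) :=
    Finset.mem_image.2 ⟨⟨b, mem_partners.2 h⟩, Finset.mem_attach _ _, rfl⟩
  have hf : wgt G σ f ∈ ({1, 2, 3, 4} : Finset ℝ) \
      ((partners G σ f).attach.image (fun x => wgt G σ x.1)) := by
    rw [wgt_eq]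
    exact Finset.min'_mem _ _
  intro hc
  rw [hc] at hf
  exact (Finset.mem_sdiff.1 hf).2 hmem

end Greedy

/-- If `G` is nice then `χ_σ^e(G) ≤ 4`: for every linear order on `E(G)` there is an edge
weighting with weights in `{1,2,3,4}` whose induced sequence colouring is proper. -/
theorem stmt_4 [Fintype V] [DecidableEq V] (G : SimpleGraph V) [DecidableRel G.Adj]
    (hnice : Nice G) (σ : LinearOrder G.edgeSet) :
    ∃ w : G.edgeSet → ℝ, (∀ e, w e ∈ ({1, 2, 3, 4} : Set ℝ)) ∧ ProperSeq G σ w := by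
  refine ⟨wgt G σ, fun e => ?_, fun u v hadj heq => ?_⟩
  · have := wgt_mem (G := G) (σ := σ) e
    simpa using this
  · unfold seqColor at heq
    have hlen : (incEdges G σ u).length = (incEdges G σ v).length := by
      have := congrArg List.length heq
      simpa using this
    have hlen2 : 2 ≤ (incEdges G σ u).length := by
      rw [len_incEdges]
      rcases hnice u v hadj with h | h
      · exact h
      · have : G.degree v = G.degree u := by
          rw [← len_incEdges (σ := σ), ← len_incEdges (σ := σ), hlen]
        omega
    obtain ⟨a, b, hua, hvb, hk, hQ⟩ := cov hadj hlen hlen2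
    have h1 : (incEdges G σ u)[rk G σ u a]? = some a := rk_getElem? hua
    have h2 : (incEdges G σ v)[rk G σ v b]? = some b := rk_getElem? hvb
    have h3 : ((incEdges G σ u).map (wgt G σ))[rk G σ u a]?
        = ((incEdges G σ v).map (wgt G σ))[rk G σ u a]? := by rw [heq]
    rw [List.getElem?_map, List.getElem?_map, h1, hk, h2] at h3
    simp only [Option.map_some, Option.some.injEq] at h3
    rcases hQ with hQ | hQ
    · exact wgt_ne hQ h3
    · exact wgt_ne hQ h3.symm
end

section
/- For every finite simple graph G, χ_σ^t(G) ≤ 3: for every linear order on the disjoint union V(G) ∪ E(G) there exists a total weighting w : V(G) ∪ E(G) → {1,2,3} whose induced total sequence colouring of the vertices is proper. -/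
/-!
Common definitions: total sequence colourings induced by a total weighting and a linear
order on the disjoint union `V(G) ⊕ E(G)` of a finite simple graph.
-/

open Finset

variable {V : Type*}

/-! ### Auxiliary machinery -/

set_option linter.unusedSectionVars false
set_option maxHeartbeats 1600000

section FunColor

/-- Any "functional graph" is properly 3-colourable: given `g : α → α` mapping a finite
set `s` into itself, there is `f : α → Fin 3` such that `f x ≠ f (g x)` whenever `x ∈ s`
and `g x ≠ x`. -/
lemma exists_funColoring {α : Type*} [DecidableEq α] :
    ∀ (n : ℕ) (s : Finset α), s.card = n → ∀ (g : α → α), (∀ x ∈ s, g x ∈ s) →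
      ∃ f : α → Fin 3, ∀ x ∈ s, g x ≠ x → f x ≠ f (g x) := by
  intro n
  induction n using Nat.strong_induction_on with
  | _ n ih =>
    intro s hcard g hg
    rcases s.eq_empty_or_nonempty with rfl | hne
    · exact ⟨fun _ => 0, by simp⟩
    -- find x₀ with at most one preimage in s
    have hsum : s.card = ∑ x ∈ s, (s.filter (fun y => g y = x)).card :=
      Finset.card_eq_sum_card_fiberwise hg
    have hex : ∃ x₀ ∈ s, (s.filter (fun y => g y = x₀)).card ≤ 1 := by
      by_contra h
      push_neg at h
      have h2 : ∀ x ∈ s, 2 ≤ (s.filter (fun y => g y = x)).card := fun x hx => h x hx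
      have : 2 * s.card ≤ s.card := by
        calc 2 * s.card = ∑ _x ∈ s, 2 := by rw [Finset.sum_const, smul_eq_mul, mul_comm]
        _ ≤ ∑ x ∈ s, (s.filter (fun y => g y = x)).card := Finset.sum_le_sum h2
        _ = s.card := hsum.symm
      have hpos : 0 < s.card := Finset.card_pos.mpr hne
      omega
    obtain ⟨x₀, hx₀s, hfib⟩ := hex
    set s' := s.erase x₀ with hs'
    set g' : α → α := fun y => if g y = x₀ then y else g y with hg'def
    have hg' : ∀ x ∈ s', g' x ∈ s' := by
      intro x hx
      have hxs : x ∈ s := Finset.mem_of_mem_erase hx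
      by_cases hc : g x = x₀
      · simpa [hg'def, hc] using hx
      · have : g x ∈ s := hg x hxs
        simp only [hg'def, hc, if_false]
        exact Finset.mem_erase.mpr ⟨hc, this⟩
    have hlt : s'.card < n := by
      rw [← hcard]
      exact Finset.card_erase_lt_of_mem hx₀s
    obtain ⟨f', hf'⟩ := ih s'.card hlt s' rfl g' hg'
    -- the (at most one) external preimage of x₀
    set F := (s.filter (fun y => g y = x₀)).erase x₀ with hF
    have hFcard : F.card ≤ 1 := le_trans (Finset.card_erase_le) hfib
    -- choose colour c for x₀, avoiding f' (g x₀) and f' y for y ∈ F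
    have hc : ∃ c : Fin 3, c ≠ f' (g x₀) ∧ ∀ y ∈ F, c ≠ f' y := by
      rcases F.eq_empty_or_nonempty with hFe | ⟨y₁, hy₁⟩
      · obtain ⟨c, hc1, _⟩ : ∃ c : Fin 3, c ≠ f' (g x₀) ∧ c ≠ f' (g x₀) := by
          have : ∀ a b : Fin 3, ∃ c : Fin 3, c ≠ a ∧ c ≠ b := by decide
          exact this _ _
        exact ⟨c, hc1, by simp [hFe]⟩
      · obtain ⟨c, hc1, hc2⟩ : ∃ c : Fin 3, c ≠ f' (g x₀) ∧ c ≠ f' y₁ := by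
          have : ∀ a b : Fin 3, ∃ c : Fin 3, c ≠ a ∧ c ≠ b := by decide
          exact this _ _
        refine ⟨c, hc1, fun y hy => ?_⟩
        have : y = y₁ := by
          have h1 := Finset.card_le_one.mp hFcard
          exact h1 y hy y₁ hy₁
        rw [this]; exact hc2
    obtain ⟨c, hc1, hc2⟩ := hc
    refine ⟨Function.update f' x₀ c, ?_⟩
    intro x hxs hgx
    by_cases hx : x = x₀
    · subst hx
      have hgs' : g x ∈ s' := Finset.mem_erase.mpr ⟨fun h => hgx (h), hg x hxs⟩
      rw [Function.update_self, Function.update_of_ne (fun h => hgx h) _ _]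
      exact hc1
    · have hxs' : x ∈ s' := Finset.mem_erase.mpr ⟨hx, hxs⟩
      rw [Function.update_of_ne hx _ _]
      by_cases hgx₀ : g x = x₀
      · -- x ∈ F
        have hxF : x ∈ F := by
          rw [hF]
          exact Finset.mem_erase.mpr ⟨hx, Finset.mem_filter.mpr ⟨hxs, hgx₀⟩⟩
        rw [hgx₀, Function.update_self]
        exact fun h => (hc2 x hxF) h.symm
      · rw [Function.update_of_ne hgx₀ _ _]
        have hgx' : g' x = g x := by simp [hg'def, hgx₀]
        have := hf' x hxs' (by rw [hgx']; exact hgx)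
        rwa [hgx'] at this
end FunColor

section DoubleCount

/-- If each `F i ⊆ B` and every `x ∈ B` lies in at most 2 of the `F i`, then
`∑ (F i).card ≤ 2 * B.card`. -/
lemma sum_card_le_two_mul {ι β : Type*} [DecidableEq β] (t : Finset ι) (F : ι → Finset β)
    (B : Finset β) (hFB : ∀ i ∈ t, F i ⊆ B)
    (h2 : ∀ x ∈ B, (t.filter (fun i => x ∈ F i)).card ≤ 2) :
    ∑ i ∈ t, (F i).card ≤ 2 * B.card := by
  classical
  calc ∑ i ∈ t, (F i).card = ∑ i ∈ t, (B.filter (fun x => x ∈ F i)).card := by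
        refine Finset.sum_congr rfl fun i hi => ?_
        congr 1
        ext x
        simp only [Finset.mem_filter]
        exact ⟨fun hx => ⟨hFB i hi hx, hx⟩, fun hx => hx.2⟩
    _ = ∑ i ∈ t, ∑ x ∈ B, (if x ∈ F i then 1 else 0) := by
        refine Finset.sum_congr rfl fun i _ => ?_
        rw [Finset.card_filter]
    _ = ∑ x ∈ B, ∑ i ∈ t, (if x ∈ F i then 1 else 0) := Finset.sum_comm
    _ = ∑ x ∈ B, (t.filter (fun i => x ∈ F i)).card := by
        refine Finset.sum_congr rfl fun x _ => ?_
        rw [Finset.card_filter]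
    _ ≤ ∑ _x ∈ B, 2 := Finset.sum_le_sum h2
    _ = 2 * B.card := by rw [Finset.sum_const, smul_eq_mul, mul_comm]

end DoubleCount

section Graph

variable [Fintype V] [DecidableEq V] (G : SimpleGraph V) [DecidableRel G.Adj]

/-- The finset of elements of `V ⊕ E` incident to `v`. -/
noncomputable def incFin (v : V) : Finset (V ⊕ G.edgeSet) :=
  letI : DecidablePred (fun x : V ⊕ G.edgeSet =>
      Sum.elim (fun u : V => u = v) (fun e : G.edgeSet => v ∈ (e : Sym2 V)) x) :=
    Classical.decPred _
  ((Finset.univ : Finset (V ⊕ G.edgeSet)).filter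
    (fun x : V ⊕ G.edgeSet =>
      Sum.elim (fun u : V => u = v) (fun e : G.edgeSet => v ∈ (e : Sym2 V)) x))

lemma mem_incTotal {σ : LinearOrder (V ⊕ G.edgeSet)} {v : V} {x : V ⊕ G.edgeSet} :
    x ∈ incTotal G σ v ↔ x ∈ incFin G v := by
  letI := σ
  unfold incTotal
  rw [Finset.mem_sort]
  exact Iff.rfl

lemma mem_incFin {v : V} {x : V ⊕ G.edgeSet} :
    x ∈ incFin G v ↔ Sum.elim (fun u : V => u = v) (fun e : G.edgeSet => v ∈ (e : Sym2 V)) x := by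
  classical
  unfold incFin
  rw [Finset.mem_filter]
  simp

lemma card_incFin (v : V) : (incFin G v).card = G.degree v + 1 := by
  classical
  have hsplit : incFin G v = insert (Sum.inl v)
      ((Finset.univ.filter (fun e : G.edgeSet => v ∈ (e : Sym2 V))).map
        ⟨Sum.inr, Sum.inr_injective⟩) := by
    ext x
    rcases x with a | e
    · simp [mem_incFin]
    · simp [mem_incFin]
  rw [hsplit]
  rw [Finset.card_insert_of_notMem (by simp)]
  rw [Finset.card_map]
  congr 1
  -- card of incident edges = degree
  have := SimpleGraph.card_incidenceFinset_eq_degree (G := G) (v := v)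
  rw [← this]
  refine Finset.card_bij (fun e _ => (e : Sym2 V)) ?_ ?_ ?_
  · intro e he
    simp only [Finset.mem_filter] at he
    rw [SimpleGraph.mem_incidenceFinset]
    exact ⟨e.2, he.2⟩
  · intro e he e' he' h
    exact Subtype.ext h
  · intro x hx
    rw [SimpleGraph.mem_incidenceFinset] at hx
    exact ⟨⟨x, hx.1⟩, by simp [hx.2], rfl⟩

lemma length_incTotal (σ : LinearOrder (V ⊕ G.edgeSet)) (v : V) :
    (incTotal G σ v).length = G.degree v + 1 := by
  letI := σ
  unfold incTotal
  rw [Finset.length_sort]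
  exact card_incFin G v

/-- An element incident to two distinct adjacent vertices is the common edge. -/
lemma shared_eq {u v : V} (hadj : G.Adj u v) {x : V ⊕ G.edgeSet}
    (hu : x ∈ incFin G u) (hv : x ∈ incFin G v) :
    x = Sum.inr ⟨s(u, v), G.mem_edgeSet.mpr hadj⟩ := by
  rcases x with a | e
  · rw [mem_incFin] at hu hv
    simp only [Sum.elim_inl] at hu hv
    exact absurd (hu.symm.trans hv) (G.ne_of_adj hadj)
  · rw [mem_incFin] at hu hv
    simp only [Sum.elim_inr] at hu hv
    have : (e : Sym2 V) = s(u, v) := (Sym2.mem_and_mem_iff (G.ne_of_adj hadj)).mp ⟨hu, hv⟩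
    congr 1
    exact Subtype.ext this

end Graph

section Main

variable [Fintype V] [DecidableEq V] (G : SimpleGraph V) [DecidableRel G.Adj]
  (σ : LinearOrder (V ⊕ G.edgeSet))

/-- Conflict pairs: adjacent vertices of equal degree, σ-oriented. -/
noncomputable def confPairs : Finset (V × V) :=
  @Finset.filter (V × V) (fun p : V × V =>
      G.Adj p.1 p.2 ∧ G.degree p.1 = G.degree p.2 ∧ σ.lt (Sum.inl p.1) (Sum.inl p.2))
    (Classical.decPred _) Finset.univ

lemma mem_confPairs {p : V × V} :
    p ∈ confPairs G σ ↔
      G.Adj p.1 p.2 ∧ G.degree p.1 = G.degree p.2 ∧ σ.lt (Sum.inl p.1) (Sum.inl p.2) := by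
  unfold confPairs
  rw [@Finset.mem_filter _ _ (Classical.decPred _) Finset.univ p]
  simp

/-- Candidate elements for a conflict pair: elements appearing at some common index of the
two incidence lists where the entries differ. -/
noncomputable def cand (p : V × V) : Finset (V ⊕ G.edgeSet) :=
  @Finset.filter (V ⊕ G.edgeSet) (fun x : V ⊕ G.edgeSet =>
      ∃ (k : ℕ) (h1 : k < (incTotal G σ p.1).length) (h2 : k < (incTotal G σ p.2).length),
        ((incTotal G σ p.1)[k] = x ∧ (incTotal G σ p.2)[k] ≠ x) ∨
        ((incTotal G σ p.2)[k] = x ∧ (incTotal G σ p.1)[k] ≠ x))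
    (Classical.decPred _) Finset.univ

lemma mem_cand {p : V × V} {x : V ⊕ G.edgeSet} :
    x ∈ cand G σ p ↔
      ∃ (k : ℕ) (h1 : k < (incTotal G σ p.1).length) (h2 : k < (incTotal G σ p.2).length),
        ((incTotal G σ p.1)[k] = x ∧ (incTotal G σ p.2)[k] ≠ x) ∨
        ((incTotal G σ p.2)[k] = x ∧ (incTotal G σ p.1)[k] ≠ x) := by
  unfold cand
  rw [@Finset.mem_filter _ _ (Classical.decPred _) Finset.univ x]
  simp

/-- The incidence finset of each endpoint, minus the common edge, is contained in the
candidate set. -/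
lemma erase_subset_cand {p : V × V} (hp : p ∈ confPairs G σ) (hadj : G.Adj p.1 p.2)
    {y : V} (hy : y = p.1 ∨ y = p.2) :
    (incFin G y).erase (Sum.inr ⟨s(p.1, p.2), G.mem_edgeSet.mpr hadj⟩)
      ⊆ cand G σ p := by
  have hdeg := ((mem_confPairs G σ).mp hp).2.1
  intro x hx
  obtain ⟨hxne, hxmem⟩ := Finset.mem_erase.mp hx
  rcases hy with rfl | rfl
  · -- y = p.1
    have hxl : x ∈ incTotal G σ p.1 := (mem_incTotal G).mpr hxmem
    obtain ⟨k, hk, hkx⟩ := List.mem_iff_getElem.mp hxl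
    have hk2 : k < (incTotal G σ p.2).length := by
      rwa [length_incTotal, ← hdeg, ← length_incTotal G σ p.1]
    refine (mem_cand G σ).mpr ⟨k, hk, hk2, Or.inl ⟨hkx, fun hcon => ?_⟩⟩
    have hx2 : x ∈ incFin G p.2 := (mem_incTotal G).mp (hcon ▸ List.getElem_mem hk2)
    exact hxne (shared_eq G hadj hxmem hx2)
  · -- y = p.2
    have hxl : x ∈ incTotal G σ p.2 := (mem_incTotal G).mpr hxmem
    obtain ⟨k, hk, hkx⟩ := List.mem_iff_getElem.mp hxl
    have hk1 : k < (incTotal G σ p.1).length := by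
      rwa [length_incTotal, hdeg, ← length_incTotal G σ p.2]
    refine (mem_cand G σ).mpr ⟨k, hk1, hk, Or.inr ⟨hkx, fun hcon => ?_⟩⟩
    have hx1 : x ∈ incFin G p.1 := (mem_incTotal G).mp (hcon ▸ List.getElem_mem hk1)
    exact hxne (shared_eq G hadj hx1 hxmem)

/-- Each element of `V ⊕ E` is incident to at most 2 vertices. -/
lemma card_incident_le_two (x : V ⊕ G.edgeSet) (U : Finset V) :
    (U.filter (fun y => x ∈ incFin G y)).card ≤ 2 := by
  classical
  rcases x with a | e
  · have hsub : U.filter (fun y => Sum.inl a ∈ incFin G y) ⊆ {a} := by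
      intro y hy
      have := (mem_incFin G).mp (Finset.mem_filter.mp hy).2
      simp only [Sum.elim_inl] at this
      simp [this]
    exact le_trans (Finset.card_le_card hsub) (by simp)
  · obtain ⟨a, b, hab⟩ : ∃ a b, (e : Sym2 V) = s(a, b) := by
      induction (e : Sym2 V) using Sym2.ind with
      | _ a b => exact ⟨a, b, rfl⟩
    have hsub : U.filter (fun y => Sum.inr e ∈ incFin G y) ⊆ {a, b} := by
      intro y hy
      have := (mem_incFin G).mp (Finset.mem_filter.mp hy).2
      simp only [Sum.elim_inr] at this
      rw [hab, Sym2.mem_iff] at this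
      simp only [Finset.mem_insert, Finset.mem_singleton]
      exact this
    exact le_trans (Finset.card_le_card hsub) (Finset.card_insert_le _ _ |>.trans (by simp))

/-- Hall condition for the candidate sets. -/
lemma hall_condition :
    ∀ s : Finset {p : V × V // p ∈ confPairs G σ},
      s.card ≤ (s.biUnion (fun i => cand G σ i.1)).card := by
  classical
  intro s
  -- Step 1 : 2 * s.card = ∑_{y ∈ U} degS y
  have step1 : 2 * s.card =
      ∑ y ∈ s.biUnion (fun i => {i.1.1, i.1.2}),
        (s.filter (fun i => i.1.1 = y ∨ i.1.2 = y)).card := by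
    have hswap : ∑ y ∈ s.biUnion (fun i => {i.1.1, i.1.2}),
          (s.filter (fun i => i.1.1 = y ∨ i.1.2 = y)).card
        = ∑ i ∈ s, ((s.biUnion (fun i => {i.1.1, i.1.2})).filter
            (fun y => i.1.1 = y ∨ i.1.2 = y)).card := by
      calc ∑ y ∈ s.biUnion (fun i => {i.1.1, i.1.2}),
            (s.filter (fun i => i.1.1 = y ∨ i.1.2 = y)).card
          = ∑ y ∈ s.biUnion (fun i => {i.1.1, i.1.2}), ∑ i ∈ s,
              (if i.1.1 = y ∨ i.1.2 = y then 1 else 0) := by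
            refine Finset.sum_congr rfl fun y _ => ?_; rw [Finset.card_filter]
        _ = ∑ i ∈ s, ∑ y ∈ s.biUnion (fun i => {i.1.1, i.1.2}),
              (if i.1.1 = y ∨ i.1.2 = y then 1 else 0) := Finset.sum_comm
        _ = ∑ i ∈ s, ((s.biUnion (fun i => {i.1.1, i.1.2})).filter
              (fun y => i.1.1 = y ∨ i.1.2 = y)).card := by
            refine Finset.sum_congr rfl fun i _ => ?_; rw [Finset.card_filter]
    rw [hswap]
    have hper : ∀ i ∈ s, ((s.biUnion (fun i => {i.1.1, i.1.2})).filter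
        (fun y => i.1.1 = y ∨ i.1.2 = y)).card = 2 := by
      intro i hi
      have hne : i.1.1 ≠ i.1.2 := G.ne_of_adj ((mem_confPairs G σ).mp i.2).1
      have heq2 : (s.biUnion (fun i => {i.1.1, i.1.2})).filter
          (fun y => i.1.1 = y ∨ i.1.2 = y) = {i.1.1, i.1.2} := by
        ext y
        simp only [Finset.mem_filter, Finset.mem_insert, Finset.mem_singleton]
        constructor
        · rintro ⟨_, h | h⟩
          · exact Or.inl h.symm
          · exact Or.inr h.symm
        · rintro (rfl | rfl)
          · exact ⟨Finset.mem_biUnion.mpr ⟨i, hi, by simp⟩, Or.inl rfl⟩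
          · exact ⟨Finset.mem_biUnion.mpr ⟨i, hi, by simp⟩, Or.inr rfl⟩
      rw [heq2, Finset.card_pair hne]
    rw [Finset.sum_congr rfl hper, Finset.sum_const, smul_eq_mul, mul_comm]
  -- Step 2 : degS y ≤ degree y
  have step2 : ∀ y ∈ s.biUnion (fun i => {i.1.1, i.1.2}),
      (s.filter (fun i => i.1.1 = y ∨ i.1.2 = y)).card ≤ G.degree y := by
    intro y _
    rw [← SimpleGraph.card_neighborFinset_eq_degree]
    refine Finset.card_le_card_of_injOn (fun i => if i.1.1 = y then i.1.2 else i.1.1) ?_ ?_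
    · intro i hi
      obtain ⟨his, hior⟩ := Finset.mem_filter.mp hi
      have hadj : G.Adj i.1.1 i.1.2 := ((mem_confPairs G σ).mp i.2).1
      by_cases h1 : i.1.1 = y
      · simp only [h1, if_true]
        rw [Finset.mem_coe, SimpleGraph.mem_neighborFinset]
        exact h1 ▸ hadj
      · have h2 : i.1.2 = y := by tauto
        simp only [h1, if_false]
        rw [Finset.mem_coe, SimpleGraph.mem_neighborFinset]
        exact (h2 ▸ hadj).symm
    · intro i hi j hj hij
      obtain ⟨his, hior⟩ := Finset.mem_filter.mp hi
      obtain ⟨hjs, hjor⟩ := Finset.mem_filter.mp hj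
      simp only at hij
      have hlti := ((mem_confPairs G σ).mp i.2).2.2
      have hltj := ((mem_confPairs G σ).mp j.2).2.2
      have hasym : ∀ a b : V ⊕ G.edgeSet, σ.lt a b → σ.lt b a → False := by
        intro a b hab hba
        letI := σ
        exact absurd hba (lt_asymm hab)
      by_cases h1 : i.1.1 = y <;> by_cases h2 : j.1.1 = y
      · simp only [h1, h2, if_true] at hij
        exact Subtype.ext (Prod.ext (h1.trans h2.symm) hij)
      · simp only [h1, h2, if_true, if_false] at hij
        have hj2 : j.1.2 = y := by tauto
        exfalso
        refine hasym (Sum.inl i.1.1) (Sum.inl i.1.2) hlti ?_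
        have e1 : (Sum.inl i.1.2 : V ⊕ G.edgeSet) = Sum.inl j.1.1 := congrArg Sum.inl hij
        have e2 : (Sum.inl i.1.1 : V ⊕ G.edgeSet) = Sum.inl j.1.2 :=
          congrArg Sum.inl (h1.trans hj2.symm)
        rw [e1, e2]; exact hltj
      · simp only [h1, h2, if_true, if_false] at hij
        have hi2 : i.1.2 = y := by tauto
        exfalso
        refine hasym (Sum.inl j.1.1) (Sum.inl j.1.2) hltj ?_
        have e1 : (Sum.inl j.1.2 : V ⊕ G.edgeSet) = Sum.inl i.1.1 := congrArg Sum.inl hij.symm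
        have e2 : (Sum.inl j.1.1 : V ⊕ G.edgeSet) = Sum.inl i.1.2 :=
          congrArg Sum.inl (h2.trans hi2.symm)
        rw [e1, e2]; exact hlti
      · simp only [h1, h2, if_false] at hij
        have hi2 : i.1.2 = y := by tauto
        have hj2 : j.1.2 = y := by tauto
        exact Subtype.ext (Prod.ext hij (hi2.trans hj2.symm))
  -- Step 3 : a family of subsets of the biUnion of candidate sets
  have step3 : ∀ y ∈ s.biUnion (fun i => {i.1.1, i.1.2}),
      ∃ Ay : Finset (V ⊕ G.edgeSet),
      Ay ⊆ s.biUnion (fun i => cand G σ i.1) ∧ G.degree y ≤ Ay.card ∧ Ay ⊆ incFin G y := by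
    intro y hy
    obtain ⟨i, his, hyi⟩ := Finset.mem_biUnion.mp hy
    have hyor : y = i.1.1 ∨ y = i.1.2 := by
      simpa [Finset.mem_insert, Finset.mem_singleton] using hyi
    have hadj := ((mem_confPairs G σ).mp i.2).1
    refine ⟨(incFin G y).erase
        (Sum.inr ⟨s(i.1.1, i.1.2), G.mem_edgeSet.mpr hadj⟩),
      ?_, ?_, fun _ hx => Finset.mem_of_mem_erase hx⟩
    · intro x hx
      exact Finset.mem_biUnion.mpr ⟨i, his, erase_subset_cand G σ i.2 hadj hyor hx⟩
    · have hmem : (Sum.inr ⟨s(i.1.1, i.1.2), G.mem_edgeSet.mpr hadj⟩ :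
          V ⊕ G.edgeSet) ∈ incFin G y := by
        rw [mem_incFin]
        simp only [Sum.elim_inr]
        rcases hyor with rfl | rfl
        · exact Sym2.mem_mk_left _ _
        · exact Sym2.mem_mk_right _ _
      rw [Finset.card_erase_of_mem hmem, card_incFin]
      omega
  choose A hA1 hA2 hA3 using step3
  -- Step 4 : ∑_{y∈U} degree y ≤ 2 * B.card
  have step4 : ∑ y ∈ s.biUnion (fun i => {i.1.1, i.1.2}), G.degree y ≤
      2 * (s.biUnion (fun i => cand G σ i.1)).card := by
    have h1 : ∑ y ∈ s.biUnion (fun i => {i.1.1, i.1.2}), G.degree y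
        = ∑ z ∈ (s.biUnion (fun i => {i.1.1, i.1.2})).attach, G.degree z.1 :=
      (Finset.sum_attach _ _).symm
    rw [h1]
    have h2 : ∑ z ∈ (s.biUnion (fun i => {i.1.1, i.1.2})).attach, G.degree z.1 ≤
        ∑ z ∈ (s.biUnion (fun i => {i.1.1, i.1.2})).attach, (A z.1 z.2).card :=
      Finset.sum_le_sum (fun z _ => hA2 z.1 z.2)
    refine le_trans h2 ?_
    refine sum_card_le_two_mul ((s.biUnion (fun i => {i.1.1, i.1.2})).attach)
      (fun z => A z.1 z.2) (s.biUnion (fun i => cand G σ i.1))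
      (fun z _ => hA1 z.1 z.2) ?_
    intro x _
    have hmap : ((s.biUnion (fun i => {i.1.1, i.1.2})).attach.filter
        (fun z => x ∈ A z.1 z.2)).card ≤
        ((s.biUnion (fun i => {i.1.1, i.1.2})).filter (fun y => x ∈ incFin G y)).card := by
      refine Finset.card_le_card_of_injOn (fun z => z.1) ?_ ?_
      · intro z hz
        obtain ⟨_, hzx⟩ := Finset.mem_filter.mp hz
        exact Finset.mem_filter.mpr ⟨z.2, hA3 z.1 z.2 hzx⟩
      · intro a _ b _ hab
        exact Subtype.ext hab
    exact le_trans hmap (card_incident_le_two G x _)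
  -- combine
  have hfinal : 2 * s.card ≤ 2 * (s.biUnion (fun i => cand G σ i.1)).card := by
    rw [step1]
    refine le_trans (Finset.sum_le_sum step2) step4
  omega

end Main

/-- For every graph `G`, `χ_σ^t(G) ≤ 3`. -/
theorem stmt_5 [Fintype V] [DecidableEq V] (G : SimpleGraph V) [DecidableRel G.Adj]
    (σ : LinearOrder (V ⊕ G.edgeSet)) :
    ∃ w : V ⊕ G.edgeSet → ℝ, (∀ x, w x ∈ ({1, 2, 3} : Set ℝ)) ∧ ProperTotalSeq G σ w := by
  classical
  -- Hall: a system of distinct representatives for the candidate sets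
  obtain ⟨r, rinj, rmem⟩ :=
    (Finset.all_card_le_biUnion_card_iff_exists_injective
      (fun i : {p : V × V // p ∈ confPairs G σ} => cand G σ i.1)).mp (hall_condition G σ)
  -- partners
  have hz : ∀ i : {p : V × V // p ∈ confPairs G σ}, ∃ z : V ⊕ G.edgeSet, z ≠ r i ∧
      ∃ (k : ℕ) (h1 : k < (incTotal G σ i.1.1).length) (h2 : k < (incTotal G σ i.1.2).length),
        ((incTotal G σ i.1.1)[k] = r i ∧ (incTotal G σ i.1.2)[k] = z) ∨
        ((incTotal G σ i.1.2)[k] = r i ∧ (incTotal G σ i.1.1)[k] = z) := by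
    intro i
    obtain ⟨k, h1, h2, hcase⟩ := (mem_cand G σ).mp (rmem i)
    rcases hcase with ⟨ha, hb⟩ | ⟨ha, hb⟩
    · exact ⟨(incTotal G σ i.1.2)[k], hb, k, h1, h2, Or.inl ⟨ha, rfl⟩⟩
    · exact ⟨(incTotal G σ i.1.1)[k], hb, k, h1, h2, Or.inr ⟨ha, rfl⟩⟩
  choose z hzne hzspec using hz
  -- constraint function
  set g : V ⊕ G.edgeSet → V ⊕ G.edgeSet :=
    fun x => if h : ∃ i, r i = x then z h.choose else x with hgdef
  have hgr : ∀ i, g (r i) = z i := by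
    intro i
    have hex : ∃ j, r j = r i := ⟨i, rfl⟩
    have : hex.choose = i := rinj hex.choose_spec
    simp only [hgdef, dif_pos hex]
    rw [this]
  -- colouring
  obtain ⟨f, hf⟩ := exists_funColoring (Finset.univ : Finset (V ⊕ G.edgeSet)).card
    Finset.univ rfl g (fun x _ => Finset.mem_univ _)
  set w : V ⊕ G.edgeSet → ℝ := fun x => ((f x : ℕ) : ℝ) + 1 with hwdef
  have hwmem : ∀ x, w x ∈ ({1, 2, 3} : Set ℝ) := by
    intro x
    have hv : (f x : ℕ) = 0 ∨ (f x : ℕ) = 1 ∨ (f x : ℕ) = 2 := by omega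
    rcases hv with h | h | h <;> simp [hwdef, h] <;> norm_num
  have hwinj : ∀ a b : V ⊕ G.edgeSet, w a = w b → f a = f b := by
    intro a b hab
    simp only [hwdef] at hab
    have : ((f a : ℕ) : ℝ) = ((f b : ℕ) : ℝ) := by linarith
    have : (f a : ℕ) = (f b : ℕ) := Nat.cast_injective this
    omega
  refine ⟨w, hwmem, ?_⟩
  -- key asymmetric lemma
  have key : ∀ u v : V, G.Adj u v → G.degree u = G.degree v →
      σ.lt (Sum.inl u) (Sum.inl v) →
      totalSeqColor G σ w u ≠ totalSeqColor G σ w v := by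
    intro u v hadj hdeg hlt heq
    have hp : (u, v) ∈ confPairs G σ := (mem_confPairs G σ).mpr ⟨hadj, hdeg, hlt⟩
    set i : {p : V × V // p ∈ confPairs G σ} := ⟨(u, v), hp⟩ with hi
    obtain ⟨k, h1, h2, hcase⟩ := hzspec i
    -- equality of the two sequences at index k
    have h1' : k < (totalSeqColor G σ w u).length := by
      simpa [totalSeqColor] using h1
    have h2' : k < (totalSeqColor G σ w v).length := by
      simpa [totalSeqColor] using h2
    have hgeteq : (totalSeqColor G σ w u)[k] = (totalSeqColor G σ w v)[k] := by
      have := congrArg (fun l : List ℝ => l[k]?) heq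
      rw [List.getElem?_eq_getElem h1', List.getElem?_eq_getElem h2'] at this
      exact Option.some.inj this
    have hwk : w ((incTotal G σ u)[k]) = w ((incTotal G σ v)[k]) := by
      have e1 : (totalSeqColor G σ w u)[k] = w ((incTotal G σ u)[k]) := by
        simp [totalSeqColor]
      have e2 : (totalSeqColor G σ w v)[k] = w ((incTotal G σ v)[k]) := by
        simp [totalSeqColor]
      rw [e1, e2] at hgeteq
      exact hgeteq
    have hcon : f (r i) ≠ f (z i) := by
      have := hf (r i) (Finset.mem_univ _)
      rw [hgr i] at this
      exact this (hzne i)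
    rcases hcase with ⟨ha, hb⟩ | ⟨ha, hb⟩
    · -- incTotal u at k = r i, incTotal v at k = z i
      simp only [hi] at ha hb
      rw [ha, hb] at hwk
      exact hcon (hwinj _ _ hwk)
    · simp only [hi] at ha hb
      rw [ha, hb] at hwk
      exact hcon (hwinj _ _ hwk.symm)
  -- conclude
  intro u v hadj heq
  have hdeg : G.degree u = G.degree v := by
    have := congrArg List.length heq
    simp only [totalSeqColor, List.length_map] at this
    rw [length_incTotal, length_incTotal] at this
    omega
  have hne : (Sum.inl u : V ⊕ G.edgeSet) ≠ Sum.inl v := by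
    intro h
    exact G.ne_of_adj hadj (Sum.inl.inj h)
  have htri : σ.lt (Sum.inl u : V ⊕ G.edgeSet) (Sum.inl v) ∨
      σ.lt (Sum.inl v : V ⊕ G.edgeSet) (Sum.inl u) := by
    letI := σ
    rcases lt_trichotomy (Sum.inl u : V ⊕ G.edgeSet) (Sum.inl v) with h | h | h
    · exact Or.inl h
    · exact absurd h hne
    · exact Or.inr h
  rcases htri with h | h
  · exact key u v hadj hdeg h heq
  · exact key v u hadj.symm hdeg.symm h heq.symm
end

section
/- Let G be a finite simple graph with minimum degree δ and maximum degree Δ. If δ > log_3(2Δ² − 2Δ + 1) + 2, then ch_σ^e(G) ≤ 3: for every linear order on E(G) and every assignment to each edge e of a set L_e of three real numbers, there exists a weighting w with w(e) ∈ L_e for every edge e whose induced sequence colouring of the vertices is proper. -/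
/-!
Common definitions: sequence colourings induced by an edge weighting and a linear
order on the edge set of a finite simple graph.
-/

open Finset

variable {V : Type*}

set_option linter.unusedSectionVars false
set_option linter.unusedVariables false
set_option maxHeartbeats 2000000

section LLLcore
variable {ι : Type*} [Fintype ι] [DecidableEq ι]

/-- mix two functions along a set of coordinates -/
def mixFn (I : Finset ι) (a b : ι → ℝ) : ι → ℝ := fun i => if i ∈ I then a i else b i

lemma indep_count (Ω : Finset (ι → ℝ))
    (hmix : ∀ a ∈ Ω, ∀ b ∈ Ω, ∀ I : Finset ι, mixFn I a b ∈ Ω)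
    (P Q : (ι → ℝ) → Prop) [DecidablePred P] [DecidablePred Q] (I : Finset ι)
    (hP : ∀ a b, (∀ i ∈ I, a i = b i) → (P a ↔ P b))
    (hQ : ∀ a b, (∀ i ∉ I, a i = b i) → (Q a ↔ Q b)) :
    (Ω.filter fun w => P w ∧ Q w).card * Ω.card
      = (Ω.filter P).card * (Ω.filter Q).card := by
  rw [← Finset.card_product, ← Finset.card_product]
  apply Finset.card_bij' (fun p _ => (mixFn I p.1 p.2, mixFn I p.2 p.1))
    (fun p _ => (mixFn I p.1 p.2, mixFn I p.2 p.1))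
  · rintro ⟨a, b⟩ hab
    simp only [Finset.mem_product, Finset.mem_filter] at hab ⊢
    obtain ⟨⟨ha, hPa, hQa⟩, hb⟩ := hab
    refine ⟨⟨hmix a ha b hb I, ?_⟩, hmix b hb a ha I, ?_⟩
    · exact (hP _ a (fun i hi => by simp [mixFn, hi])).mpr hPa
    · exact (hQ _ a (fun i hi => by simp [mixFn, hi])).mpr hQa
  · rintro ⟨a, b⟩ hab
    simp only [Finset.mem_product, Finset.mem_filter] at hab ⊢
    obtain ⟨⟨ha, hPa⟩, hb, hQb⟩ := hab
    refine ⟨⟨hmix a ha b hb I, ?_, ?_⟩, hmix b hb a ha I⟩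
    · exact (hP _ a (fun i hi => by simp [mixFn, hi])).mpr hPa
    · exact (hQ _ b (fun i hi => by simp [mixFn, hi])).mpr hQb
  · rintro ⟨a, b⟩ _
    ext i <;> simp [mixFn] <;> split <;> simp
  · rintro ⟨a, b⟩ _
    ext i <;> simp [mixFn] <;> split <;> simp

variable {J : Type*} [Fintype J] [DecidableEq J]

variable (Ω : Finset (ι → ℝ)) (P : J → (ι → ℝ) → Prop) [∀ j, DecidablePred (P j)]

/-- set of weightings avoiding all events in `S` -/
def GoodSet (S : Finset J) : Finset (ι → ℝ) := Ω.filter fun w => ∀ j ∈ S, ¬ P j w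

lemma goodSet_insert (S : Finset J) (j : J) :
    GoodSet Ω P (insert j S) = (GoodSet Ω P S).filter (fun w => ¬ P j w) := by
  ext w
  simp only [GoodSet, filter_filter, mem_filter, mem_insert, or_imp, forall_and, forall_eq]
  tauto

lemma goodSet_card_split (S : Finset J) (j : J) :
    ((GoodSet Ω P S).filter (P j)).card + (GoodSet Ω P (insert j S)).card
      = (GoodSet Ω P S).card := by
  rw [goodSet_insert]
  exact Finset.card_filter_add_card_filter_not _

lemma goodSet_mono {S T : Finset J} (h : S ⊆ T) : GoodSet Ω P T ⊆ GoodSet Ω P S := by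
  intro w hw
  simp only [GoodSet, mem_filter] at hw ⊢
  exact ⟨hw.1, fun j hj => hw.2 j (h hj)⟩

lemma lll_main
    (hmix : ∀ a ∈ Ω, ∀ b ∈ Ω, ∀ I : Finset ι, mixFn I a b ∈ Ω)
    (vbl : J → Finset ι)
    (hdet : ∀ j a b, (∀ i ∈ vbl j, a i = b i) → (P j a ↔ P j b))
    (x : ℝ) (hx0 : 0 < x) (hx1 : x ≤ 1) (D : ℕ)
    (hN : ∀ j : J, (univ.filter fun j' => ¬ Disjoint (vbl j') (vbl j)).card ≤ D + 1)
    (hp : ∀ j, ((Ω.filter (P j)).card : ℝ) ≤ x * (1-x)^D * Ω.card) :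
    ∀ (n : ℕ) (S : Finset J) (j : J), S.card ≤ n → j ∉ S →
      (((GoodSet Ω P S).filter (P j)).card : ℝ) ≤ x * (GoodSet Ω P S).card := by
  rcases Nat.eq_zero_or_pos Ω.card with hΩ0 | hΩpos
  · intro n S j _ _
    have h1 : GoodSet Ω P S ⊆ Ω := Finset.filter_subset _ _
    have : (GoodSet Ω P S).card = 0 := by
      have := Finset.card_le_card h1
      omega
    have h2 : ((GoodSet Ω P S).filter (P j)).card = 0 := by
      have := Finset.card_le_card (Finset.filter_subset (P j) (GoodSet Ω P S))
      omega
    rw [h2, this]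
    norm_num
  intro n
  induction n with
  | zero =>
    intro S j hS _
    have hSe : S = ∅ := Finset.card_eq_zero.mp (Nat.le_zero.mp hS)
    subst hSe
    have hG : GoodSet Ω P ∅ = Ω := by simp [GoodSet]
    rw [hG]
    calc ((Ω.filter (P j)).card : ℝ) ≤ x * (1-x)^D * Ω.card := hp j
      _ ≤ x * Ω.card := by
          have h1 : (1-x)^D ≤ 1 := pow_le_one₀ (by linarith) (by linarith)
          have h2 : (0:ℝ) ≤ Ω.card := Nat.cast_nonneg _
          have h3 : x * (1-x)^D ≤ x := by nlinarith
          exact mul_le_mul_of_nonneg_right h3 h2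
  | succ n ih =>
    intro S j hS hj
    set S₁ : Finset J := S.filter (fun j' => ¬ Disjoint (vbl j') (vbl j)) with hS₁def
    set S₂ : Finset J := S \ S₁ with hS₂def
    have hS₁sub : S₁ ⊆ S := Finset.filter_subset _ _
    have hS₂sub : S₂ ⊆ S := Finset.sdiff_subset
    have hunion : S₂ ∪ S₁ = S := Finset.sdiff_union_of_subset hS₁sub
    -- Step D : card GoodSet S ≥ (1-x)^|S₁| * card GoodSet S₂
    have stepD : ∀ T ⊆ S₁, (1-x)^T.card * ((GoodSet Ω P S₂).card : ℝ)
        ≤ ((GoodSet Ω P (S₂ ∪ T)).card : ℝ) := by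
      intro T hT
      induction T using Finset.induction_on with
      | empty => simp
      | @insert a T ha ihT =>
        have haS₁ : a ∈ S₁ := hT (Finset.mem_insert_self a T)
        have hTsub : T ⊆ S₁ := fun t ht => hT (Finset.mem_insert_of_mem ht)
        have haS : a ∈ S := hS₁sub haS₁
        have hanotin : a ∉ S₂ ∪ T := by
          simp only [Finset.mem_union]
          rintro (h | h)
          · rw [hS₂def] at h; exact (Finset.mem_sdiff.mp h).2 haS₁
          · exact ha h
        have hcard : (S₂ ∪ T).card ≤ n := by
          have hsub2 : S₂ ∪ T ⊆ S.erase a := by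
            intro t ht
            rw [Finset.mem_erase]
            refine ⟨fun h => hanotin (h ▸ ht), ?_⟩
            rcases Finset.mem_union.mp ht with h | h
            · exact hS₂sub h
            · exact hS₁sub (hTsub h)
          have := Finset.card_le_card hsub2
          rw [Finset.card_erase_of_mem haS] at this
          omega
        have hkey := ih (S₂ ∪ T) a hcard hanotin
        have hsplit := goodSet_card_split Ω P (S₂ ∪ T) a
        have hins : S₂ ∪ insert a T = insert a (S₂ ∪ T) := Finset.union_insert _ _ _
        rw [hins]
        have : ((GoodSet Ω P (insert a (S₂ ∪ T))).card : ℝ)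
            = ((GoodSet Ω P (S₂ ∪ T)).card : ℝ) - ((GoodSet Ω P (S₂ ∪ T)).filter (P a)).card := by
          have hc := congrArg (Nat.cast : ℕ → ℝ) hsplit
          push_cast at hc
          linarith
        rw [this, Finset.card_insert_of_notMem ha, pow_succ]
        have := ihT hTsub
        have c1 : (0:ℝ) ≤ ((GoodSet Ω P S₂).card : ℝ) := Nat.cast_nonneg _
        have c2 : (0:ℝ) ≤ ((GoodSet Ω P (S₂ ∪ T)).card : ℝ) := Nat.cast_nonneg _
        nlinarith
    -- Step E : |S₁| ≤ D
    have stepE : S₁.card ≤ D := by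
      rcases Finset.eq_empty_or_nonempty (vbl j) with hv | hv
      · have : S₁ = ∅ := by
          rw [hS₁def]
          apply Finset.filter_false_of_mem
          intro j' _
          rw [hv]
          simp
        simp [this]
      · have hjN : j ∈ univ.filter fun j' => ¬ Disjoint (vbl j') (vbl j) := by
          simp only [Finset.mem_filter, Finset.mem_univ, true_and]
          exact fun h => hv.ne_empty (Finset.disjoint_self_iff_empty _ |>.mp h)
        have hsub : S₁ ⊆ (univ.filter fun j' => ¬ Disjoint (vbl j') (vbl j)).erase j := by
          intro t ht
          rw [Finset.mem_erase]
          constructor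
          · rintro rfl; exact hj (hS₁sub ht)
          · simp only [Finset.mem_filter, Finset.mem_univ, true_and]
            exact (Finset.mem_filter.mp ht).2
        have := Finset.card_le_card hsub
        rw [Finset.card_erase_of_mem hjN] at this
        have := hN j
        omega
    -- Step B/C : independence
    have stepBC : (((GoodSet Ω P S₂).filter (P j)).card : ℝ)
        ≤ x * (1-x)^D * (GoodSet Ω P S₂).card := by
      have hQdet : ∀ a b : ι → ℝ, (∀ i ∉ vbl j, a i = b i) →
          ((∀ j' ∈ S₂, ¬ P j' a) ↔ (∀ j' ∈ S₂, ¬ P j' b)) := by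
        intro a b hab
        have : ∀ j' ∈ S₂, (P j' a ↔ P j' b) := by
          intro j' hj'
          apply hdet
          intro i hi
          apply hab
          intro hiI
          have hdisj : Disjoint (vbl j') (vbl j) := by
            by_contra hnd
            have : j' ∈ S₁ := Finset.mem_filter.mpr ⟨hS₂sub hj', hnd⟩
            rw [hS₂def] at hj'
            exact (Finset.mem_sdiff.mp hj').2 this
          exact (Finset.disjoint_left.mp hdisj hi) hiI
        constructor <;> intro h j' hj' <;> have := this j' hj'
        · exact fun hb => h j' hj' (this.mpr hb)
        · exact fun ha => h j' hj' (this.mp ha)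
      have heq : ((GoodSet Ω P S₂).filter (P j)).card * Ω.card
          = (Ω.filter (P j)).card * (GoodSet Ω P S₂).card := by
        have h1 : (GoodSet Ω P S₂).filter (P j)
            = Ω.filter (fun w => P j w ∧ ∀ j' ∈ S₂, ¬ P j' w) := by
          rw [GoodSet, Finset.filter_filter]
          apply Finset.filter_congr
          intro w _
          tauto
        rw [h1]
        exact indep_count Ω hmix (P j) (fun w => ∀ j' ∈ S₂, ¬ P j' w) (vbl j)
          (hdet j) hQdet
      have hΩR : (0:ℝ) < Ω.card := by exact_mod_cast hΩpos
      have heqR : (((GoodSet Ω P S₂).filter (P j)).card : ℝ) * Ω.card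
          = ((Ω.filter (P j)).card : ℝ) * (GoodSet Ω P S₂).card := by exact_mod_cast heq
      have hpj := hp j
      have hGnn : (0:ℝ) ≤ (GoodSet Ω P S₂).card := Nat.cast_nonneg _
      rw [← mul_le_mul_iff_left₀ hΩR, heqR]
      calc ((Ω.filter (P j)).card : ℝ) * (GoodSet Ω P S₂).card
          ≤ (x * (1-x)^D * Ω.card) * (GoodSet Ω P S₂).card := by
            apply mul_le_mul_of_nonneg_right hpj hGnn
        _ = x * (1-x)^D * (GoodSet Ω P S₂).card * Ω.card := by ring
    -- combine
    have hsubBad : (GoodSet Ω P S).filter (P j) ⊆ (GoodSet Ω P S₂).filter (P j) :=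
      Finset.filter_subset_filter _ (goodSet_mono Ω P hS₂sub)
    have hmono : (((GoodSet Ω P S).filter (P j)).card : ℝ)
        ≤ ((GoodSet Ω P S₂).filter (P j)).card := by
      exact_mod_cast Finset.card_le_card hsubBad
    have hpowle : (1-x)^D ≤ (1-x)^S₁.card :=
      pow_le_pow_of_le_one (by linarith) (by linarith) stepE
    have hD := stepD S₁ (Finset.Subset.refl S₁)
    rw [hunion] at hD
    calc (((GoodSet Ω P S).filter (P j)).card : ℝ)
        ≤ ((GoodSet Ω P S₂).filter (P j)).card := hmono
      _ ≤ x * (1-x)^D * (GoodSet Ω P S₂).card := stepBC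
      _ ≤ x * (1-x)^S₁.card * (GoodSet Ω P S₂).card := by
          apply mul_le_mul_of_nonneg_right _ (Nat.cast_nonneg _)
          exact mul_le_mul_of_nonneg_left hpowle (le_of_lt hx0)
      _ = x * ((1-x)^S₁.card * (GoodSet Ω P S₂).card) := by ring
      _ ≤ x * (GoodSet Ω P S).card := by
          apply mul_le_mul_of_nonneg_left hD (le_of_lt hx0)

lemma lll
    (hmix : ∀ a ∈ Ω, ∀ b ∈ Ω, ∀ I : Finset ι, mixFn I a b ∈ Ω)
    (vbl : J → Finset ι)
    (hdet : ∀ j a b, (∀ i ∈ vbl j, a i = b i) → (P j a ↔ P j b))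
    (x : ℝ) (hx0 : 0 < x) (hx1 : x < 1) (D : ℕ)
    (hN : ∀ j : J, (univ.filter fun j' => ¬ Disjoint (vbl j') (vbl j)).card ≤ D + 1)
    (hp : ∀ j, ((Ω.filter (P j)).card : ℝ) ≤ x * (1-x)^D * Ω.card)
    (hΩpos : 0 < Ω.card) :
    ∃ w ∈ Ω, ∀ j, ¬ P j w := by
  have main := lll_main Ω P hmix vbl hdet x hx0 (le_of_lt hx1) D hN hp
  have hchain : ∀ T : Finset J, (1-x)^T.card * (Ω.card : ℝ) ≤ ((GoodSet Ω P T).card : ℝ) := by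
    intro T
    induction T using Finset.induction_on with
    | empty => simp [GoodSet]
    | @insert a T ha ihT =>
      have hkey := main T.card T a (le_refl _) ha
      have hsplit := goodSet_card_split Ω P T a
      have : ((GoodSet Ω P (insert a T)).card : ℝ)
          = ((GoodSet Ω P T).card : ℝ) - ((GoodSet Ω P T).filter (P a)).card := by
        have hc := congrArg (Nat.cast : ℕ → ℝ) hsplit
        push_cast at hc
        linarith
      rw [this, Finset.card_insert_of_notMem ha, pow_succ]
      have c1 : (0:ℝ) ≤ (Ω.card : ℝ) := Nat.cast_nonneg _
      have c2 : (0:ℝ) ≤ ((GoodSet Ω P T).card : ℝ) := Nat.cast_nonneg _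
      nlinarith
  have hpos : (0:ℝ) < ((GoodSet Ω P univ).card : ℝ) := by
    have h1 : (0:ℝ) < (1-x)^(univ : Finset J).card * (Ω.card : ℝ) := by
      apply mul_pos (pow_pos (by linarith) _)
      exact_mod_cast hΩpos
    linarith [hchain univ]
  have : (GoodSet Ω P univ).Nonempty := by
    rw [← Finset.card_pos]
    exact_mod_cast hpos
  obtain ⟨w, hw⟩ := this
  simp only [GoodSet, Finset.mem_filter] at hw
  exact ⟨w, hw.1, fun j => hw.2 j (Finset.mem_univ j)⟩


end LLLcore

section Matching
variable {ι : Type*} [Fintype ι] [DecidableEq ι]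

lemma matching_count (L : ι → Finset ℝ) (hL : ∀ i, (L i).card = 3)
    (M : Finset (ι × ι))
    (h1 : ∀ p ∈ M, p.1 ≠ p.2)
    (h2 : ∀ p ∈ M, ∀ q ∈ M, p.1 = q.1 → p = q)
    (h3 : ∀ p ∈ M, ∀ q ∈ M, p.1 ≠ q.2) :
    ((Fintype.piFinset L).filter fun w => ∀ p ∈ M, w p.1 = w p.2).card * 3 ^ M.card
      ≤ (Fintype.piFinset L).card := by
  classical
  set val : ι → ℕ → ℝ := fun i k => ((L i).sort (· ≤ ·)).getD k 0 with hval
  have hlen : ∀ i, ((L i).sort (· ≤ ·)).length = 3 := by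
    intro i; rw [Finset.length_sort]; exact hL i
  have hvmem : ∀ i k, k < 3 → val i k ∈ L i := by
    intro i k hk
    rw [hval]
    simp only
    rw [List.getD_eq_getElem _ _ (by rw [hlen]; exact hk)]
    have := List.getElem_mem (l := (L i).sort (· ≤ ·)) (n := k) (by rw [hlen]; exact hk)
    rwa [Finset.mem_sort] at this
  have hvinj : ∀ i k l, k < 3 → l < 3 → val i k = val i l → k = l := by
    intro i k l hk hl hkl
    rw [hval] at hkl
    simp only at hkl
    rw [List.getD_eq_getElem _ _ (by rw [hlen]; exact hk),
      List.getD_eq_getElem _ _ (by rw [hlen]; exact hl)] at hkl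
    exact (((L i).sort_nodup (· ≤ ·)).getElem_inj_iff).mp hkl
  -- the injection
  set Bad : Finset (ι → ℝ) := (Fintype.piFinset L).filter fun w => ∀ p ∈ M, w p.1 = w p.2
    with hBad
  set F : ((ι → ℝ) × (↥M → Fin 3)) → (ι → ℝ) :=
    fun wc i => if h : ∃ p, p ∈ M ∧ p.1 = i
      then val i (wc.2 ⟨h.choose, h.choose_spec.1⟩) else wc.1 i with hF
  have keyF : ∀ wc (q : ↥M), F wc (q : ι × ι).1 = val (q : ι × ι).1 (wc.2 q) := by
    intro wc q
    have h : ∃ p, p ∈ M ∧ p.1 = (q : ι × ι).1 := ⟨q, q.2, rfl⟩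
    rw [hF]
    simp only
    rw [dif_pos h]
    have hq : (⟨h.choose, h.choose_spec.1⟩ : ↥M) = q :=
      Subtype.ext (h2 h.choose h.choose_spec.1 (q : ι × ι) q.2 h.choose_spec.2)
    rw [hq]
  have keyF2 : ∀ wc i, (¬ ∃ p, p ∈ M ∧ p.1 = i) → F wc i = wc.1 i := by
    intro wc i h
    rw [hF]; simp only; rw [dif_neg h]
  have hcard : Bad.card * 3 ^ M.card = (Bad ×ˢ (univ : Finset (↥M → Fin 3))).card := by
    rw [Finset.card_product, Finset.card_univ, Fintype.card_fun, Fintype.card_fin,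
      Fintype.card_coe]
  rw [hcard]
  apply Finset.card_le_card_of_injOn F
  · rintro ⟨w, c⟩ hwc
    rw [Finset.mem_coe, Finset.mem_product] at hwc
    have hw : w ∈ Fintype.piFinset L := (Finset.mem_filter.mp hwc.1).1
    rw [Finset.mem_coe, Fintype.mem_piFinset]
    intro i
    by_cases h : ∃ p, p ∈ M ∧ p.1 = i
    · rw [hF]; simp only; rw [dif_pos h]
      exact hvmem i _ (Fin.is_lt _)
    · rw [keyF2 _ _ h]
      exact Fintype.mem_piFinset.mp hw i
  · rintro ⟨w, c⟩ hwc ⟨w', c'⟩ hwc' heq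
    simp only [Finset.coe_product, Set.mem_prod, Finset.mem_coe] at hwc hwc'
    have hwB : w ∈ Bad := hwc.1
    have hw'B : w' ∈ Bad := hwc'.1
    have hwa : ∀ p ∈ M, w p.1 = w p.2 := (Finset.mem_filter.mp hwB).2
    have hw'a : ∀ p ∈ M, w' p.1 = w' p.2 := (Finset.mem_filter.mp hw'B).2
    have hww' : w = w' := by
      funext i
      by_cases h : ∃ p, p ∈ M ∧ p.1 = i
      · obtain ⟨p, hpM, hpi⟩ := h
        subst hpi
        have hno : ¬ ∃ q, q ∈ M ∧ q.1 = p.2 := by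
          rintro ⟨q, hq, hq2⟩
          exact h3 q hq p hpM hq2
        have e1 : w p.2 = w' p.2 := by
          have := congrFun heq p.2
          rwa [keyF2 _ _ hno, keyF2 _ _ hno] at this
        rw [hwa p hpM, hw'a p hpM, e1]
      · have := congrFun heq i
        rwa [keyF2 _ _ h, keyF2 _ _ h] at this
    have hcc' : c = c' := by
      funext q
      have := congrFun heq (q : ι × ι).1
      rw [keyF (w, c) q, keyF (w', c') q] at this
      exact Fin.ext (hvinj _ _ _ (Fin.is_lt _) (Fin.is_lt _) this)
    exact Prod.ext hww' hcc'


end Matching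

lemma numeric_key (δ Δ D : ℕ) (hδ6 : 6 ≤ δ) (hδΔ : δ ≤ Δ)
    (hD : (D : ℝ) + 1 = 2*(Δ:ℝ)^2 - 2*(δ:ℝ) + 1)
    (hpow : 2*(Δ:ℝ)^2 - 2*(Δ:ℝ) + 1 < (3:ℝ) ^ (δ - 2)) :
    Real.exp 1 * ((D:ℝ) + 1) ≤ (3:ℝ) ^ (δ - 1) := by
  have h1 : (3:ℝ) ^ (δ - 1) = (3:ℝ) ^ (δ - 2) * 3 := by
    have : δ - 1 = (δ - 2) + 1 := by omega
    rw [this, pow_succ]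
  rw [h1, hD]
  have hE : Real.exp 1 < 2.7182818286 := Real.exp_one_lt_d9
  have hE0 : (0:ℝ) < Real.exp 1 := Real.exp_pos 1
  have hδ6R : (6:ℝ) ≤ (δ:ℝ) := by exact_mod_cast hδ6
  have hδΔR : (δ:ℝ) ≤ (Δ:ℝ) := by exact_mod_cast hδΔ
  have hΔ6R : (6:ℝ) ≤ (Δ:ℝ) := le_trans hδ6R hδΔR
  nlinarith [sq_nonneg ((Δ:ℝ) - 6), sq_nonneg ((Δ:ℝ) - 10)]

lemma numeric_xbound (δ D : ℕ) (hD1 : 1 ≤ D) (hδ2 : 2 ≤ δ)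
    (hkey : Real.exp 1 * ((D:ℝ) + 1) ≤ (3:ℝ) ^ (δ - 1)) :
    1 / ((3:ℝ) ^ (δ - 1)) ≤ (1/((D:ℝ)+1)) * (1 - 1/((D:ℝ)+1)) ^ D := by
  have hDR : (1:ℝ) ≤ (D:ℝ) := by exact_mod_cast hD1
  have hD0 : (0:ℝ) < (D:ℝ) := by linarith
  have hD1R : (0:ℝ) < (D:ℝ) + 1 := by linarith
  have h1x : 1 - 1/((D:ℝ)+1) = (D:ℝ)/((D:ℝ)+1) := by field_simp; ring
  have hexp : Real.exp (-(1/(D:ℝ))) ≤ 1 - 1/((D:ℝ)+1) := by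
    rw [h1x]
    have h2 : 1/(D:ℝ) + 1 ≤ Real.exp (1/(D:ℝ)) := Real.add_one_le_exp _
    have h3 : (0:ℝ) < 1/(D:ℝ) + 1 := by positivity
    rw [Real.exp_neg]
    rw [inv_le_comm₀ (Real.exp_pos _) (by positivity)]
    calc ((D:ℝ)/((D:ℝ)+1))⁻¹ = ((D:ℝ)+1)/(D:ℝ) := by rw [inv_div]
      _ = 1/(D:ℝ) + 1 := by field_simp; ring
      _ ≤ Real.exp (1/(D:ℝ)) := h2
  have hpow2 : Real.exp (-1) ≤ (1 - 1/((D:ℝ)+1)) ^ D := by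
    have hne : (D:ℝ) ≠ 0 := ne_of_gt hD0
    have heq : Real.exp (-1) = (Real.exp (-(1/(D:ℝ)))) ^ D := by
      rw [← Real.exp_nat_mul]
      congr 1
      field_simp
    rw [heq]
    exact pow_le_pow_left₀ (le_of_lt (Real.exp_pos _)) hexp D
  have hpos : (0:ℝ) < Real.exp 1 * ((D:ℝ)+1) := by positivity
  calc 1 / ((3:ℝ) ^ (δ - 1)) ≤ 1 / (Real.exp 1 * ((D:ℝ)+1)) :=
        one_div_le_one_div_of_le hpos hkey
    _ = (1/((D:ℝ)+1)) * Real.exp (-1) := by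
        rw [Real.exp_neg]; field_simp
    _ ≤ (1/((D:ℝ)+1)) * (1 - 1/((D:ℝ)+1)) ^ D := by
        apply mul_le_mul_of_nonneg_left hpow2
        positivity


lemma six_le (δ Δ : ℕ) (hδ3 : 3 ≤ δ) (hδΔ : δ ≤ Δ)
    (hpowR : 2*(Δ:ℝ)^2 - 2*(Δ:ℝ) + 1 < (3:ℝ) ^ (δ - 2)) : 6 ≤ δ := by
  by_contra hcon
  push_neg at hcon
  have hΔR : (δ:ℝ) ≤ (Δ:ℝ) := by exact_mod_cast hδΔ
  have hδ3R : (3:ℝ) ≤ (δ:ℝ) := by exact_mod_cast hδ3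
  interval_cases δ <;>
    (have hc := (Nat.cast_le (α := ℝ)).mpr hδΔ
     push_cast at hc
     norm_num at hpowR
     nlinarith [hc, sq_nonneg ((Δ:ℝ) - 3)])

section Graph
variable [Fintype V] [DecidableEq V] (G : SimpleGraph V) [DecidableRel G.Adj]

noncomputable def starE (v : V) : Finset G.edgeSet :=
  (Finset.univ : Finset G.edgeSet).filter (fun e : G.edgeSet => v ∈ (e : Sym2 V))

lemma mem_starE {v : V} {f : G.edgeSet} : f ∈ starE G v ↔ v ∈ (f : Sym2 V) := by
  simp [starE]

lemma starE_card (v : V) : (starE G v).card = G.degree v := by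
  rw [← SimpleGraph.card_incidenceFinset_eq_degree]
  refine Finset.card_bij (fun f _ => (f : Sym2 V)) ?_ ?_ ?_
  · intro f hf
    rw [SimpleGraph.mem_incidenceFinset]
    exact ⟨f.2, (mem_starE G).mp hf⟩
  · intro f _ g _ h
    exact Subtype.ext h
  · intro g hg
    rw [SimpleGraph.mem_incidenceFinset] at hg
    exact ⟨⟨g, hg.1⟩, (mem_starE G).mpr hg.2, rfl⟩

variable (σ : LinearOrder G.edgeSet)

lemma incEdges_eq (v : V) : incEdges G σ v = (letI := σ; (starE G v).sort σ.le) := rfl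

lemma incEdges_length (v : V) : (incEdges G σ v).length = G.degree v := by
  letI := σ
  rw [incEdges_eq, Finset.length_sort, starE_card]

lemma incEdges_nodup (v : V) : (incEdges G σ v).Nodup := by
  letI := σ
  rw [incEdges_eq]
  exact Finset.sort_nodup _ _

lemma incEdges_mem {v : V} {f : G.edgeSet} : f ∈ incEdges G σ v ↔ v ∈ (f : Sym2 V) := by
  letI := σ
  rw [incEdges_eq, Finset.mem_sort, mem_starE]

lemma seqColor_length (w : G.edgeSet → ℝ) (v : V) :
    (seqColor G σ w v).length = G.degree v := by
  rw [seqColor, List.length_map, incEdges_length]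

lemma edge_eq_of_mem {u v : V} (huv : u ≠ v) {f : G.edgeSet}
    (hu : u ∈ (f : Sym2 V)) (hv : v ∈ (f : Sym2 V)) : (f : Sym2 V) = s(u, v) :=
  (Sym2.mem_and_mem_iff huv).mp ⟨hu, hv⟩

/-- the event for edge `e`: its endpoints get the same colour sequence -/
def evP (σ : LinearOrder G.edgeSet) (e : G.edgeSet) (w : G.edgeSet → ℝ) : Prop :=
  ∃ u v : V, (e : Sym2 V) = s(u, v) ∧ seqColor G σ w u = seqColor G σ w v

/-- the set of edges on which the event of `e` depends: edges sharing a vertex with `e` -/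
noncomputable def evbl (e : G.edgeSet) : Finset G.edgeSet :=
  (Finset.univ : Finset G.edgeSet).filter
    (fun f => ∃ z, z ∈ (f : Sym2 V) ∧ z ∈ (e : Sym2 V))

lemma mem_evbl {e f : G.edgeSet} :
    f ∈ evbl G e ↔ ∃ z, z ∈ (f : Sym2 V) ∧ z ∈ (e : Sym2 V) := by
  simp [evbl]

lemma seqColor_congr (w w' : G.edgeSet → ℝ) (v : V)
    (h : ∀ f : G.edgeSet, v ∈ (f : Sym2 V) → w f = w' f) :
    seqColor G σ w v = seqColor G σ w' v := by
  rw [seqColor, seqColor]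
  apply List.map_congr_left
  intro f hf
  exact h f ((incEdges_mem G σ).mp hf)

lemma evP_det (e : G.edgeSet) (a b : G.edgeSet → ℝ)
    (hab : ∀ f ∈ evbl G e, a f = b f) : evP G σ e a ↔ evP G σ e b := by
  have key : ∀ v : V, v ∈ (e : Sym2 V) →
      seqColor G σ a v = seqColor G σ b v := by
    intro v hv
    apply seqColor_congr
    intro f hf
    exact hab f ((mem_evbl G).mpr ⟨v, hf, hv⟩)
  constructor
  · rintro ⟨u, v, he, hc⟩
    have hu : u ∈ (e : Sym2 V) := by rw [he]; exact Sym2.mem_mk_left u v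
    have hv : v ∈ (e : Sym2 V) := by rw [he]; exact Sym2.mem_mk_right u v
    exact ⟨u, v, he, by rw [← key u hu, ← key v hv]; exact hc⟩
  · rintro ⟨u, v, he, hc⟩
    have hu : u ∈ (e : Sym2 V) := by rw [he]; exact Sym2.mem_mk_left u v
    have hv : v ∈ (e : Sym2 V) := by rw [he]; exact Sym2.mem_mk_right u v
    exact ⟨u, v, he, by rw [key u hu, key v hv]; exact hc⟩


lemma event_bound (L : G.edgeSet → Finset ℝ) (hL : ∀ e, (L e).card = 3)
    (e : G.edgeSet) [DecidablePred (evP G σ e)]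
    (mc : ∀ (M : Finset (G.edgeSet × G.edgeSet)),
      (∀ p ∈ M, ∀ q ∈ M, p.1 = q.1 → p = q) →
      (∀ p ∈ M, ∀ q ∈ M, p.1 ≠ q.2) →
      ((Fintype.piFinset L).filter fun w => ∀ p ∈ M, w p.1 = w p.2).card * 3 ^ M.card
        ≤ (Fintype.piFinset L).card) :
    ((Fintype.piFinset L).filter (evP G σ e)).card * 3 ^ (G.minDegree - 1)
      ≤ (Fintype.piFinset L).card := by
  classical
  have hex : ∃ u v, (e : Sym2 V) = s(u, v) := by
    induction (e : Sym2 V) using Sym2.ind with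
    | _ x y => exact ⟨x, y, rfl⟩
  obtain ⟨u, v, he⟩ := hex
  have hadj : G.Adj u v := G.mem_edgeSet.mp (he ▸ e.2)
  have hne : u ≠ v := hadj.ne
  -- from the event, the colour sequences of u and v agree
  have hcuv : ∀ w, evP G σ e w → seqColor G σ w u = seqColor G σ w v := by
    intro w hw
    obtain ⟨u', v', he', hc⟩ := hw
    rw [he] at he'
    rcases Sym2.eq_iff.mp he' with ⟨h1, h2⟩ | ⟨h1, h2⟩
    · rw [h1, h2]; exact hc
    · rw [h1, h2]; exact hc.symm
  by_cases hdeg : G.degree u = G.degree v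
  case neg =>
    have hempty : (Fintype.piFinset L).filter (evP G σ e) = ∅ := by
      rw [Finset.filter_eq_empty_iff]
      intro w _ hw
      have hlen := congrArg List.length (hcuv w hw)
      rw [seqColor_length, seqColor_length] at hlen
      exact hdeg hlen
    rw [hempty]
    simp
  case pos =>
  set d := G.degree u with hd
  have hEul : (incEdges G σ u).length = d := incEdges_length G σ u
  have hEvl : (incEdges G σ v).length = d := by rw [incEdges_length G σ v, ← hdeg]
  have heEv : e ∈ incEdges G σ v :=
    (incEdges_mem G σ).mpr (by rw [he]; exact Sym2.mem_mk_right u v)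
  set j := (incEdges G σ v).idxOf e with hjdef
  have hj : j < d := by rw [← hEvl]; exact List.idxOf_lt_length_iff.mpr heEv
  have hEvj : (incEdges G σ v).getD j e = e := by
    rw [List.getD_eq_getElem _ _ (by omega)]
    exact List.getElem_idxOf (by omega)
  set g : ℕ → G.edgeSet × G.edgeSet :=
    fun k => ((incEdges G σ u).getD k e, (incEdges G σ v).getD k e) with hg
  set M := ((Finset.range d).erase j).image g with hM
  have memEu : ∀ k, k < d → u ∈ (((incEdges G σ u).getD k e : G.edgeSet) : Sym2 V) := by
    intro k hk
    rw [List.getD_eq_getElem _ _ (by omega)]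
    exact (incEdges_mem G σ).mp (List.getElem_mem _)
  have memEv : ∀ k, k < d → v ∈ (((incEdges G σ v).getD k e : G.edgeSet) : Sym2 V) := by
    intro k hk
    rw [List.getD_eq_getElem _ _ (by omega)]
    exact (incEdges_mem G σ).mp (List.getElem_mem _)
  have keyuv : ∀ f : G.edgeSet, u ∈ (f : Sym2 V) → v ∈ (f : Sym2 V) → f = e := by
    intro f hu hv
    apply Subtype.ext
    rw [edge_eq_of_mem G hne hu hv, he]
  have hEuinj : ∀ k k', k < d → k' < d →
      (incEdges G σ u).getD k e = (incEdges G σ u).getD k' e → k = k' := by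
    intro k k' hk hk' hkk'
    rw [List.getD_eq_getElem _ _ (by omega), List.getD_eq_getElem _ _ (by omega)] at hkk'
    exact ((incEdges_nodup G σ u).getElem_inj_iff).mp hkk'
  have hEvinj : ∀ k k', k < d → k' < d →
      (incEdges G σ v).getD k e = (incEdges G σ v).getD k' e → k = k' := by
    intro k k' hk hk' hkk'
    rw [List.getD_eq_getElem _ _ (by omega), List.getD_eq_getElem _ _ (by omega)] at hkk'
    exact ((incEdges_nodup G σ v).getElem_inj_iff).mp hkk'
  have hmem_erase : ∀ k ∈ (Finset.range d).erase j, k < d ∧ k ≠ j := by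
    intro k hk
    have h1 := Finset.mem_of_mem_erase hk
    exact ⟨Finset.mem_range.mp h1, Finset.ne_of_mem_erase hk⟩
  have h3 : ∀ p ∈ M, ∀ q ∈ M, p.1 ≠ q.2 := by
    rintro p hp q hq hpq
    obtain ⟨k, hk, rfl⟩ := Finset.mem_image.mp hp
    obtain ⟨k', hk', rfl⟩ := Finset.mem_image.mp hq
    obtain ⟨hkd, hkj⟩ := hmem_erase _ hk
    obtain ⟨hk'd, hk'j⟩ := hmem_erase _ hk'
    simp only [hg] at hpq
    have hue : u ∈ (((incEdges G σ u).getD k e : G.edgeSet) : Sym2 V) := memEu k hkd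
    have hve : v ∈ (((incEdges G σ u).getD k e : G.edgeSet) : Sym2 V) := by
      rw [hpq]; exact memEv k' hk'd
    have h4 := keyuv _ hue hve
    rw [hpq] at h4
    have h5 : (incEdges G σ v).getD k' e = (incEdges G σ v).getD j e := by
      rw [h4, hEvj]
    exact hk'j (hEvinj _ _ hk'd (by omega) h5)
  have h2 : ∀ p ∈ M, ∀ q ∈ M, p.1 = q.1 → p = q := by
    rintro p hp q hq hpq
    obtain ⟨k, hk, rfl⟩ := Finset.mem_image.mp hp
    obtain ⟨k', hk', rfl⟩ := Finset.mem_image.mp hq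
    obtain ⟨hkd, _⟩ := hmem_erase _ hk
    obtain ⟨hk'd, _⟩ := hmem_erase _ hk'
    simp only [hg] at hpq
    rw [hEuinj _ _ hkd hk'd hpq]
  have hMcard : M.card = d - 1 := by
    rw [hM, Finset.card_image_of_injOn, Finset.card_erase_of_mem (Finset.mem_range.mpr hj),
      Finset.card_range]
    intro k hk k' hk' hkk'
    obtain ⟨hkd, _⟩ := hmem_erase _ hk
    obtain ⟨hk'd, _⟩ := hmem_erase _ hk'
    exact hEuinj _ _ hkd hk'd (congrArg Prod.fst hkk')
  have himp : ∀ w, evP G σ e w → ∀ p ∈ M, w p.1 = w p.2 := by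
    intro w hw p hp
    obtain ⟨k, hk, rfl⟩ := Finset.mem_image.mp hp
    obtain ⟨hkd, _⟩ := hmem_erase _ hk
    have hc : (incEdges G σ u).map w = (incEdges G σ v).map w := hcuv w hw
    have hlk : k < ((incEdges G σ u).map w).length := by
      rw [List.length_map]; omega
    have h1 := List.getElem_of_eq hc hlk
    rw [List.getElem_map, List.getElem_map] at h1
    simp only [hg]
    rw [List.getD_eq_getElem _ _ (by omega), List.getD_eq_getElem _ _ (by omega)]
    exact h1
  have hmc := mc M h2 h3
  have hdd : G.minDegree ≤ d := SimpleGraph.minDegree_le_degree G u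
  have hss : (Fintype.piFinset L).filter (evP G σ e)
      ⊆ (Fintype.piFinset L).filter fun w => ∀ p ∈ M, w p.1 = w p.2 := by
    intro w hw
    rw [Finset.mem_filter] at hw ⊢
    exact ⟨hw.1, himp w hw.2⟩
  calc ((Fintype.piFinset L).filter (evP G σ e)).card * 3 ^ (G.minDegree - 1)
      ≤ ((Fintype.piFinset L).filter fun w => ∀ p ∈ M, w p.1 = w p.2).card * 3 ^ M.card := by
        apply Nat.mul_le_mul (Finset.card_le_card hss)
        rw [hMcard]
        exact Nat.pow_le_pow_right (by norm_num) (Nat.sub_le_sub_right hdd 1)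
    _ ≤ (Fintype.piFinset L).card := hmc


lemma dep_bound (e : G.edgeSet) {u v : V} (he : (e : Sym2 V) = s(u, v)) (hadj : G.Adj u v) :
    ((Finset.univ : Finset G.edgeSet).filter
        fun f => ¬ Disjoint (evbl G f) (evbl G e)).card
      + (G.degree u + G.degree v) ≤ 2 * G.maxDegree * G.maxDegree + 1 := by
  classical
  have hne : u ≠ v := hadj.ne
  set S' : Finset V := G.neighborFinset u ∪ G.neighborFinset v with hS'
  set Ne : Finset G.edgeSet := (Finset.univ : Finset G.edgeSet).filter
    (fun f => ¬ Disjoint (evbl G f) (evbl G e)) with hNe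
  have huS' : u ∈ S' := Finset.mem_union_right _ ((G.mem_neighborFinset v u).mpr hadj.symm)
  have hvS' : v ∈ S' := Finset.mem_union_left _ ((G.mem_neighborFinset u v).mpr hadj)
  -- double counting
  have hdouble : ∑ z ∈ S', (Ne.filter fun f : G.edgeSet => z ∈ (f : Sym2 V)).card
      = ∑ f ∈ Ne, (S'.filter fun z : V => z ∈ (f : Sym2 V)).card := by
    simp only [Finset.card_filter]
    rw [Finset.sum_comm]
  -- upper bound
  have hupper : ∑ z ∈ S', (Ne.filter fun f : G.edgeSet => z ∈ (f : Sym2 V)).card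
      ≤ 2 * G.maxDegree * G.maxDegree := by
    calc ∑ z ∈ S', (Ne.filter fun f : G.edgeSet => z ∈ (f : Sym2 V)).card
        ≤ ∑ _z ∈ S', G.maxDegree := by
          apply Finset.sum_le_sum
          intro z _
          have h1 : Ne.filter (fun f : G.edgeSet => z ∈ (f : Sym2 V)) ⊆ starE G z := by
            intro f hf
            exact (mem_starE G).mpr (Finset.mem_filter.mp hf).2
          calc (Ne.filter fun f : G.edgeSet => z ∈ (f : Sym2 V)).card
              ≤ (starE G z).card := Finset.card_le_card h1
            _ = G.degree z := starE_card G z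
            _ ≤ G.maxDegree := G.degree_le_maxDegree z
      _ = S'.card * G.maxDegree := by rw [Finset.sum_const, smul_eq_mul]
      _ ≤ (2 * G.maxDegree) * G.maxDegree := by
          apply Nat.mul_le_mul_right
          calc S'.card ≤ (G.neighborFinset u).card + (G.neighborFinset v).card :=
                Finset.card_union_le _ _
            _ = G.degree u + G.degree v := by
                rw [G.card_neighborFinset_eq_degree, G.card_neighborFinset_eq_degree]
            _ ≤ 2 * G.maxDegree := by
                have := G.degree_le_maxDegree u
                have := G.degree_le_maxDegree v
                omega
  -- stars are contained in Ne
  have hstarsub : starE G u ∪ starE G v ⊆ Ne := by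
    intro f hf
    rw [hNe, Finset.mem_filter]
    refine ⟨Finset.mem_univ f, ?_⟩
    rw [Finset.not_disjoint_iff]
    refine ⟨f, ?_, ?_⟩
    · rw [mem_evbl G]
      have : ∃ z, z ∈ (f : Sym2 V) := by
        induction (f : Sym2 V) using Sym2.ind with
        | _ x y => exact ⟨x, Sym2.mem_mk_left x y⟩
      obtain ⟨z, hz⟩ := this
      exact ⟨z, hz, hz⟩
    · rw [mem_evbl G]
      rcases Finset.mem_union.mp hf with hfu | hfv
      · exact ⟨u, (mem_starE G).mp hfu, by rw [he]; exact Sym2.mem_mk_left u v⟩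
      · exact ⟨v, (mem_starE G).mp hfv, by rw [he]; exact Sym2.mem_mk_right u v⟩
  -- lower bound
  have hone : ∀ f ∈ Ne, 1 ≤ (S'.filter fun z : V => z ∈ (f : Sym2 V)).card := by
    intro f hf
    rw [Nat.succ_le_iff, Finset.card_pos]
    rw [hNe, Finset.mem_filter] at hf
    obtain ⟨g, hg1, hg2⟩ := Finset.not_disjoint_iff.mp hf.2
    rw [mem_evbl G] at hg1 hg2
    obtain ⟨y, hyg, hyf⟩ := hg1
    obtain ⟨z, hzg, hze⟩ := hg2
    refine ⟨y, Finset.mem_filter.mpr ⟨?_, hyf⟩⟩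
    rw [he] at hze
    rcases Sym2.mem_iff.mp hze with hz | hz
    all_goals by_cases hyz : y = z
    · rw [hyz, hz]; exact huS'
    · have hedge : (g : Sym2 V) = s(y, z) := edge_eq_of_mem G hyz hyg hzg
      have hadj2 : G.Adj y z := G.mem_edgeSet.mp (hedge ▸ g.2)
      rw [hz] at hadj2
      exact Finset.mem_union_left _ ((G.mem_neighborFinset u y).mpr hadj2.symm)
    · rw [hyz, hz]; exact hvS'
    · have hedge : (g : Sym2 V) = s(y, z) := edge_eq_of_mem G hyz hyg hzg
      have hadj2 : G.Adj y z := G.mem_edgeSet.mp (hedge ▸ g.2)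
      rw [hz] at hadj2
      exact Finset.mem_union_right _ ((G.mem_neighborFinset v y).mpr hadj2.symm)
  have htwo : ∀ f ∈ starE G u ∪ starE G v, 2 ≤ (S'.filter fun z : V => z ∈ (f : Sym2 V)).card := by
    intro f hf
    have key : ∀ a : V, a ∈ S' → G.neighborFinset a ⊆ S' → ∀ (ha : a ∈ (f : Sym2 V)),
        2 ≤ (S'.filter fun z : V => z ∈ (f : Sym2 V)).card := by
      intro a haS' hNa ha
      set b := Sym2.Mem.other ha with hb
      have hbspec : s(a, b) = (f : Sym2 V) := Sym2.other_spec ha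
      have hbadj : G.Adj a b := G.mem_edgeSet.mp (by rw [hbspec]; exact f.2)
      have hab : a ≠ b := hbadj.ne
      have hbf : b ∈ (f : Sym2 V) := Sym2.other_mem ha
      have hbS' : b ∈ S' := hNa ((G.mem_neighborFinset a b).mpr hbadj)
      have hsub2 : ({a, b} : Finset V) ⊆ S'.filter fun z : V => z ∈ (f : Sym2 V) := by
        intro z hz
        rcases Finset.mem_insert.mp hz with rfl | hz
        · exact Finset.mem_filter.mpr ⟨haS', ha⟩
        · rw [Finset.mem_singleton] at hz
          subst hz
          exact Finset.mem_filter.mpr ⟨hbS', hbf⟩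
      calc 2 = ({a, b} : Finset V).card := (Finset.card_pair hab).symm
        _ ≤ _ := Finset.card_le_card hsub2
    rcases Finset.mem_union.mp hf with hfu | hfv
    · exact key u huS' Finset.subset_union_left ((mem_starE G).mp hfu)
    · exact key v hvS' Finset.subset_union_right ((mem_starE G).mp hfv)
  -- combine lower bounds
  set SU : Finset G.edgeSet := starE G u ∪ starE G v with hSU
  have hsdcard : (Ne \ SU).card + SU.card = Ne.card :=
    Finset.card_sdiff_add_card_eq_card hstarsub
  have hsplit : ∑ f ∈ Ne \ SU, (S'.filter fun z : V => z ∈ (f : Sym2 V)).card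
      + ∑ f ∈ SU, (S'.filter fun z : V => z ∈ (f : Sym2 V)).card
      = ∑ f ∈ Ne, (S'.filter fun z : V => z ∈ (f : Sym2 V)).card :=
    Finset.sum_sdiff hstarsub
  have ha : (Ne \ SU).card * 1 ≤ ∑ f ∈ Ne \ SU, (S'.filter fun z : V => z ∈ (f : Sym2 V)).card := by
    rw [mul_one]
    calc (Ne \ SU).card = ∑ _f ∈ Ne \ SU, 1 := by rw [Finset.sum_const, smul_eq_mul, mul_one]
      _ ≤ _ := Finset.sum_le_sum fun f hf => hone f (Finset.mem_sdiff.mp hf).1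
  have hb : SU.card * 2 ≤ ∑ f ∈ SU, (S'.filter fun z : V => z ∈ (f : Sym2 V)).card := by
    calc SU.card * 2 = ∑ _f ∈ SU, 2 := by rw [Finset.sum_const, smul_eq_mul]
      _ ≤ _ := Finset.sum_le_sum fun f hf => htwo f hf
  have hstarcard : SU.card + 1 = G.degree u + G.degree v := by
    have hint : starE G u ∩ starE G v = {e} := by
      ext f
      rw [Finset.mem_inter, Finset.mem_singleton, mem_starE G, mem_starE G]
      constructor
      · rintro ⟨h1, h2⟩
        apply Subtype.ext
        rw [edge_eq_of_mem G hne h1 h2, he]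
      · rintro rfl
        rw [he]
        exact ⟨Sym2.mem_mk_left u v, Sym2.mem_mk_right u v⟩
    have hcui := Finset.card_union_add_card_inter (starE G u) (starE G v)
    rw [hint, Finset.card_singleton, starE_card G u, starE_card G v] at hcui
    rw [hSU]
    exact hcui
  -- finish
  have hfinal := hdouble
  omega


end Graph

/-- If `δ(G) > log₃(2Δ(G)² − 2Δ(G) + 1) + 2` then `ch_σ^e(G) ≤ 3`. -/
theorem stmt_6 [Fintype V] [DecidableEq V] (G : SimpleGraph V) [DecidableRel G.Adj]
    (hδ : Real.logb 3 (2 * (G.maxDegree : ℝ) ^ 2 - 2 * (G.maxDegree : ℝ) + 1) + 2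
      < (G.minDegree : ℝ))
    (σ : LinearOrder G.edgeSet)
    (L : G.edgeSet → Finset ℝ) (hL : ∀ e, (L e).card = 3) :
    ∃ w : G.edgeSet → ℝ, (∀ e, w e ∈ L e) ∧ ProperSeq G σ w := by
  classical
  by_cases hV : Nonempty V
  case neg =>
    refine ⟨fun e => (L e).min' (Finset.card_pos.mp (by rw [hL e]; norm_num)),
      fun e => (L e).min'_mem _, ?_⟩
    intro u v _
    exact absurd ⟨u⟩ hV
  case pos =>
  obtain ⟨v₀⟩ := hV
  have hX1 : (1:ℝ) ≤ 2*(G.maxDegree:ℝ)^2 - 2*(G.maxDegree:ℝ) + 1 := by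
    have h1 : (G.maxDegree:ℝ) ≤ (G.maxDegree:ℝ)^2 := by
      have h2 : G.maxDegree ≤ G.maxDegree^2 := Nat.le_self_pow (by norm_num) _
      exact_mod_cast h2
    linarith
  have hδ2 : (2:ℝ) < (G.minDegree:ℝ) := by
    have := Real.logb_nonneg (b := 3)
      (x := 2*(G.maxDegree:ℝ)^2 - 2*(G.maxDegree:ℝ) + 1) (by norm_num) hX1
    linarith
  have hδ3 : 3 ≤ G.minDegree := by
    have h1 : (2:ℕ) < G.minDegree := by exact_mod_cast hδ2
    omega
  have hδΔ : G.minDegree ≤ G.maxDegree :=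
    le_trans (G.minDegree_le_degree v₀) (G.degree_le_maxDegree v₀)
  have hpowR : 2*(G.maxDegree:ℝ)^2 - 2*(G.maxDegree:ℝ) + 1
      < (3:ℝ) ^ (G.minDegree - 2) := by
    have h0 : (0:ℝ) < 2*(G.maxDegree:ℝ)^2 - 2*(G.maxDegree:ℝ) + 1 := by linarith
    have h1 : Real.logb 3 (2*(G.maxDegree:ℝ)^2 - 2*(G.maxDegree:ℝ) + 1)
        < (G.minDegree:ℝ) - 2 := by linarith
    have h2 := (Real.logb_lt_iff_lt_rpow (by norm_num) h0).mp h1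
    have h3 : ((G.minDegree:ℝ) - 2) = ((G.minDegree - 2 : ℕ) : ℝ) := by
      have h4 : (2:ℕ) ≤ G.minDegree := by omega
      rw [Nat.cast_sub h4]
      norm_num
    rw [h3, Real.rpow_natCast] at h2
    exact h2
  have hδ6 : 6 ≤ G.minDegree := six_le _ _ hδ3 hδΔ hpowR
  have hΔ6 : 6 ≤ G.maxDegree := le_trans hδ6 hδΔ
  obtain ⟨q, hq⟩ : ∃ q, G.maxDegree * G.maxDegree = q := ⟨_, rfl⟩
  have hq6 : 6 * G.maxDegree ≤ q := by rw [← hq]; exact Nat.mul_le_mul_right _ hΔ6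
  have hD2 : 2 * G.minDegree ≤ 2 * q := by omega
  obtain ⟨D, hDdef⟩ : ∃ D, 2 * q - 2 * G.minDegree = D := ⟨_, rfl⟩
  have hD1 : 1 ≤ D := by omega
  have hDcast : (D:ℝ) + 1 = 2*(G.maxDegree:ℝ)^2 - 2*(G.minDegree:ℝ) + 1 := by
    have h5 : ((2*q - 2*G.minDegree : ℕ) : ℝ) = 2*(q:ℝ) - 2*(G.minDegree:ℝ) := by
      rw [Nat.cast_sub hD2]
      push_cast
      ring
    rw [← hDdef, h5, ← hq]
    push_cast
    ring
  have hkey := numeric_key G.minDegree G.maxDegree D hδ6 hδΔ hDcast hpowR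
  have hxb := numeric_xbound G.minDegree D hD1 (by omega) hkey
  set x : ℝ := 1/((D:ℝ)+1) with hxdef
  have hDR : (1:ℝ) ≤ (D:ℝ) := by exact_mod_cast hD1
  have hx0 : 0 < x := by rw [hxdef]; positivity
  have hx1 : x < 1 := by
    rw [hxdef, div_lt_one (by linarith)]
    linarith
  have hΩpos : 0 < (Fintype.piFinset L).card := by
    rw [Fintype.card_piFinset]
    exact Finset.prod_pos fun i _ => by rw [hL i]; norm_num
  have hmix : ∀ a ∈ Fintype.piFinset L, ∀ b ∈ Fintype.piFinset L,
      ∀ I : Finset G.edgeSet, mixFn I a b ∈ Fintype.piFinset L := by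
    intro a ha b hb I
    rw [Fintype.mem_piFinset] at ha hb ⊢
    intro i
    by_cases hi : i ∈ I
    · simpa [mixFn, hi] using ha i
    · simpa [mixFn, hi] using hb i
  have hN : ∀ e : G.edgeSet,
      ((Finset.univ.filter fun f => ¬ Disjoint (evbl G f) (evbl G e)).card) ≤ D + 1 := by
    intro e
    obtain ⟨u, v, he⟩ : ∃ u v, (e : Sym2 V) = s(u, v) := by
      induction (e : Sym2 V) using Sym2.ind with
      | _ a b => exact ⟨a, b, rfl⟩
    have hadj : G.Adj u v := G.mem_edgeSet.mp (he ▸ e.2)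
    have h1 := dep_bound G e he hadj
    rw [mul_assoc, hq] at h1
    have h2 := G.minDegree_le_degree u
    have h3 := G.minDegree_le_degree v
    omega
  have hp : ∀ e : G.edgeSet,
      (((Fintype.piFinset L).filter (evP G σ e)).card : ℝ)
        ≤ x * (1-x)^D * (Fintype.piFinset L).card := by
    intro e
    have hb := event_bound G σ L hL e
      (fun M h2 h3 => matching_count L hL M (fun p hp' => h3 p hp' p hp') h2 h3)
    have hbR : (((Fintype.piFinset L).filter (evP G σ e)).card : ℝ)
        * 3^(G.minDegree - 1) ≤ (Fintype.piFinset L).card := by exact_mod_cast hb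
    have h30 : (0:ℝ) < 3^(G.minDegree - 1 : ℕ) := by positivity
    have hΩR : (0:ℝ) ≤ ((Fintype.piFinset L).card : ℝ) := Nat.cast_nonneg _
    calc (((Fintype.piFinset L).filter (evP G σ e)).card : ℝ)
        ≤ ((Fintype.piFinset L).card : ℝ) * (1/3^(G.minDegree - 1 : ℕ)) := by
          rw [mul_one_div, le_div_iff₀ h30]
          exact hbR
      _ ≤ ((Fintype.piFinset L).card : ℝ) * (x * (1-x)^D) := by
          apply mul_le_mul_of_nonneg_left _ hΩR
          rw [hxdef]
          exact hxb
      _ = x * (1-x)^D * (Fintype.piFinset L).card := by ring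
  obtain ⟨w, hwΩ, hwev⟩ := lll (Fintype.piFinset L) (evP G σ) hmix (evbl G)
    (fun e => evP_det G σ e) x hx0 hx1 D hN hp hΩpos
  refine ⟨w, fun e => Fintype.mem_piFinset.mp hwΩ e, ?_⟩
  intro u v hadj hcol
  exact hwev ⟨s(u,v), G.mem_edgeSet.mpr hadj⟩ ⟨u, v, rfl, hcol⟩
end

section
/- Let G be a d-regular finite simple graph. If d = 5 then ch_σ^e(G) ≤ 4; if d = 4 then ch_σ^e(G) ≤ 5; and if d = 3 then ch_σ^e(G) ≤ 6. Equivalently, if d ∈ {3,4,5} then for every linear order on E(G) and every assignment to each edge e of a set L_e of 9 − d real numbers, there exists a weighting w with w(e) ∈ L_e for every edge e whose induced sequence colouring of the vertices is proper. -/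
/-!
Common definitions: sequence colourings induced by an edge weighting and a linear
order on the edge set of a finite simple graph.
-/

open Finset

variable {V : Type*}

namespace SeqAux

open scoped Classical

lemma sym2_ends (z : Sym2 V) : ∃ p : V × V, z = s(p.1, p.2) := by
  induction z using Sym2.ind with
  | _ a b => exact ⟨(a, b), rfl⟩

/-- A choice of first endpoint of an unordered pair. -/
noncomputable def end1 (z : Sym2 V) : V := (Classical.choose (sym2_ends z)).1

/-- A choice of second endpoint of an unordered pair. -/
noncomputable def end2 (z : Sym2 V) : V := (Classical.choose (sym2_ends z)).2

lemma ends_spec (z : Sym2 V) : z = s(end1 z, end2 z) := Classical.choose_spec (sym2_ends z)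

variable [Fintype V] [DecidableEq V] (G : SimpleGraph V) [DecidableRel G.Adj]
  (σ : LinearOrder G.edgeSet)

lemma mem_incEdges {v : V} {e : G.edgeSet} : e ∈ incEdges G σ v ↔ v ∈ (e : Sym2 V) := by
  letI := σ
  simp [incEdges, Finset.mem_sort]

lemma nodup_incEdges (v : V) : (incEdges G σ v).Nodup := by
  letI := σ
  exact Finset.sort_nodup _ _

lemma sorted_incEdges (v : V) : (incEdges G σ v).Pairwise σ.lt := by
  letI := σ
  exact @List.SortedLT.pairwise _ _ σ.toPreorder <| @Finset.sortedLT_sort _ σ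
    ((Finset.univ : Finset G.edgeSet).filter (fun e : G.edgeSet => v ∈ (e : Sym2 V)))

lemma slt_irrefl (e : G.edgeSet) : ¬ σ.lt e e :=
  @lt_irrefl _ σ.toPartialOrder.toPreorder e

lemma slt_of_lt_of_le {a b c : G.edgeSet} (h1 : σ.lt a b) (h2 : σ.le b c) : σ.lt a c :=
  @lt_of_lt_of_le _ σ.toPartialOrder.toPreorder a b c h1 h2

lemma slt_trichot (a b : G.edgeSet) : σ.lt a b ∨ a = b ∨ σ.lt b a :=
  @lt_trichotomy _ σ a b

lemma incEdges_get_lt {v : V} {i j : ℕ} (hij : i < j) (hj : j < (incEdges G σ v).length) :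
    σ.lt ((incEdges G σ v)[i]'(lt_trans hij hj)) ((incEdges G σ v)[j]'hj) := by
  have := (sorted_incEdges G σ v).rel_get_of_lt
    (a := ⟨i, lt_trans hij hj⟩) (b := ⟨j, hj⟩) (Fin.mk_lt_mk.mpr hij)
  simpa [List.get_eq_getElem] using this

lemma length_incEdges (v : V) : (incEdges G σ v).length = G.degree v := by
  letI := σ
  have hcard : Fintype.card {e : G.edgeSet // v ∈ (e : Sym2 V)}
      = Fintype.card (G.incidenceSet v) :=
    Fintype.card_congr
      ⟨fun x => ⟨x.1.1, x.1.2, x.2⟩, fun y => ⟨⟨y.1, y.2.1⟩, y.2.2⟩,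
        fun _ => rfl, fun _ => rfl⟩
  rw [incEdges, Finset.length_sort, ← SimpleGraph.card_incidenceSet_eq_degree, ← hcard,
    Fintype.card_subtype]

lemma indexOf_lt_length_incEdges {v : V} {e : G.edgeSet} (h : v ∈ (e : Sym2 V)) :
    (incEdges G σ v).idxOf e < (incEdges G σ v).length :=
  List.idxOf_lt_length_iff.mpr ((mem_incEdges G σ).mpr h)

lemma getElem_indexOf_incEdges {v : V} {e : G.edgeSet} (h : v ∈ (e : Sym2 V)) :
    (incEdges G σ v)[(incEdges G σ v).idxOf e]'(indexOf_lt_length_incEdges G σ h) = e := by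
  have := List.idxOf_get (a := e) (l := incEdges G σ v) (indexOf_lt_length_incEdges G σ h)
  simpa [List.get_eq_getElem] using this

lemma indexOf_getElem_incEdges {v : V} {i : ℕ} (h : i < (incEdges G σ v).length) :
    (incEdges G σ v).idxOf ((incEdges G σ v)[i]'h) = i := by
  have := List.get_idxOf (nodup_incEdges G σ v) ⟨i, h⟩
  simpa [List.get_eq_getElem] using this

lemma mem_of_getElem_incEdges {v : V} {i : ℕ} (h : i < (incEdges G σ v).length) :
    v ∈ (((incEdges G σ v)[i]'h : G.edgeSet) : Sym2 V) :=
  (mem_incEdges G σ).mp (List.getElem_mem h)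

/-- The other endpoint of an edge. -/
noncomputable def oth (x : V) (f : G.edgeSet) : V :=
  if h : x ∈ (f : Sym2 V) then Sym2.Mem.other h else x

lemma oth_spec {x y : V} {f : G.edgeSet} (h : (f : Sym2 V) = s(x, y)) : oth G x f = y := by
  have hx : x ∈ (f : Sym2 V) := by rw [h]; exact Sym2.mem_iff.mpr (Or.inl rfl)
  rw [oth, dif_pos hx]
  exact Sym2.congr_right.mp ((Sym2.other_spec hx).trans h)

/-- The "balanced" forbidden-partner contribution of endpoint `x` to edge `e`. -/
noncomputable def contrib (x : V) (e : G.edgeSet) : Finset G.edgeSet :=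
  (if (incEdges G σ x).idxOf e + 1 < (incEdges G σ x).length
      then (incEdges G σ x)[(incEdges G σ x).idxOf e + 1]?
      else (incEdges G σ x)[0]?).elim ∅ (fun f =>
    ((incEdges G σ (oth G x f))[(incEdges G σ x).idxOf e]?).elim ∅ (fun p =>
      if (incEdges G σ (oth G x f)).idxOf f = (incEdges G σ x).idxOf f ∧ σ.lt p e
      then {p} else ∅))

/-- The "unbalanced" forbidden partner of edge `e` itself. -/
noncomputable def own (e : G.edgeSet) : Finset G.edgeSet :=
  (if (incEdges G σ (end1 (e : Sym2 V))).idxOf e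
        < (incEdges G σ (end2 (e : Sym2 V))).idxOf e
      then (incEdges G σ (end2 (e : Sym2 V)))[(incEdges G σ (end1 (e : Sym2 V))).idxOf e]?
      else if (incEdges G σ (end2 (e : Sym2 V))).idxOf e
        < (incEdges G σ (end1 (e : Sym2 V))).idxOf e
      then (incEdges G σ (end1 (e : Sym2 V)))[(incEdges G σ (end2 (e : Sym2 V))).idxOf e]?
      else none).elim ∅ (fun p => if σ.lt p e then {p} else ∅)

/-- The set of σ-smaller edges whose weight `e` must avoid. -/
noncomputable def P (e : G.edgeSet) : Finset G.edgeSet :=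
  own G σ e ∪ contrib G σ (end1 (e : Sym2 V)) e ∪ contrib G σ (end2 (e : Sym2 V)) e

lemma elim_card_le {β : Type*} (o : Option β) (f : β → Finset G.edgeSet)
    (hf : ∀ a, (f a).card ≤ 1) : (o.elim ∅ f).card ≤ 1 := by
  cases o with
  | none => simp
  | some a => simpa using hf a

lemma card_contrib_le (x : V) (e : G.edgeSet) : (contrib G σ x e).card ≤ 1 := by
  rw [contrib]
  refine elim_card_le G _ _ (fun f => ?_)
  refine elim_card_le G _ _ (fun p => ?_)
  split <;> simp

lemma card_own_le (e : G.edgeSet) : (own G σ e).card ≤ 1 := by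
  rw [own]
  refine elim_card_le G _ _ (fun p => ?_)
  split <;> simp

lemma card_P_le (e : G.edgeSet) : (P G σ e).card ≤ 3 := by
  calc (P G σ e).card ≤ (own G σ e ∪ contrib G σ (end1 (e : Sym2 V)) e).card
        + (contrib G σ (end2 (e : Sym2 V)) e).card := Finset.card_union_le _ _
    _ ≤ ((own G σ e).card + (contrib G σ (end1 (e : Sym2 V)) e).card)
        + (contrib G σ (end2 (e : Sym2 V)) e).card := by
          exact Nat.add_le_add_right (Finset.card_union_le _ _) _
    _ ≤ 3 := by
          have h1 := card_own_le G σ e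
          have h2 := card_contrib_le G σ (end1 (e : Sym2 V)) e
          have h3 := card_contrib_le G σ (end2 (e : Sym2 V)) e
          omega

lemma mem_elim {β γ : Type*} [DecidableEq γ] {o : Option β} {f : β → Finset γ} {q : γ}
    (h : q ∈ o.elim ∅ f) : ∃ a, o = some a ∧ q ∈ f a := by
  cases o with
  | none => simp at h
  | some a => exact ⟨a, rfl, h⟩

lemma lt_of_mem_contrib {x : V} {e p : G.edgeSet} (h : p ∈ contrib G σ x e) : σ.lt p e := by
  rw [contrib] at h
  obtain ⟨f, _, h⟩ := mem_elim h
  obtain ⟨q, _, h⟩ := mem_elim h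
  split_ifs at h with hc
  · rw [Finset.mem_singleton] at h
    exact h ▸ hc.2
  · simp at h

lemma lt_of_mem_own {e p : G.edgeSet} (h : p ∈ own G σ e) : σ.lt p e := by
  rw [own] at h
  obtain ⟨q, _, h⟩ := mem_elim h
  split_ifs at h with hc
  · rw [Finset.mem_singleton] at h
    exact h ▸ hc
  · simp at h

lemma lt_of_mem_P {e p : G.edgeSet} (h : p ∈ P G σ e) : σ.lt p e := by
  rw [P, Finset.mem_union, Finset.mem_union] at h
  rcases h with (h | h) | h
  · exact lt_of_mem_own G σ h
  · exact lt_of_mem_contrib G σ h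
  · exact lt_of_mem_contrib G σ h

lemma common_eq {u v : V} (hne : u ≠ v) {a : G.edgeSet} (hu : u ∈ (a : Sym2 V))
    (hv : v ∈ (a : Sym2 V)) {f : G.edgeSet} (hf : (f : Sym2 V) = s(u, v)) : a = f :=
  Subtype.ext (((Sym2.mem_and_mem_iff hne).mp ⟨hu, hv⟩).trans hf.symm)

lemma mem_P_of_own {e b : G.edgeSet} (h : b ∈ own G σ e) : b ∈ P G σ e := by
  rw [P]
  exact Finset.mem_union_left _ (Finset.mem_union_left _ h)

lemma mem_own_of {u v : V} {f : G.edgeSet} (hf : (f : Sym2 V) = s(u, v))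
    (hlt : (incEdges G σ u).idxOf f < (incEdges G σ v).idxOf f)
    {b : G.edgeSet} (hb : (incEdges G σ v)[(incEdges G σ u).idxOf f]? = some b)
    (hblt : σ.lt b f) : b ∈ own G σ f := by
  rcases Sym2.eq_iff.mp (hf.symm.trans (ends_spec (f : Sym2 V))) with ⟨h1, h2⟩ | ⟨h1, h2⟩
  · rw [own, ← h1, ← h2, if_pos hlt, hb, Option.elim_some, if_pos hblt]
    exact Finset.mem_singleton_self b
  · rw [own, ← h2, ← h1, if_neg (by omega), if_pos hlt, hb, Option.elim_some, if_pos hblt]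
    exact Finset.mem_singleton_self b

lemma mem_P_of_contrib {u : V} {a b f : G.edgeSet}
    (hcand : (if (incEdges G σ u).idxOf a + 1 < (incEdges G σ u).length
        then (incEdges G σ u)[(incEdges G σ u).idxOf a + 1]?
        else (incEdges G σ u)[0]?) = some f)
    (hb : (incEdges G σ (oth G u f))[(incEdges G σ u).idxOf a]? = some b)
    (hbal : (incEdges G σ (oth G u f)).idxOf f = (incEdges G σ u).idxOf f)
    (hlt : σ.lt b a) (hu : u ∈ (a : Sym2 V)) : b ∈ P G σ a := by
  have hmem : b ∈ contrib G σ u a := by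
    rw [contrib, hcand, Option.elim_some, hb, Option.elim_some, if_pos ⟨hbal, hlt⟩]
    exact Finset.mem_singleton_self b
  have hu' : u = end1 (a : Sym2 V) ∨ u = end2 (a : Sym2 V) := by
    have := hu
    rw [ends_spec (a : Sym2 V), Sym2.mem_iff] at this
    exact this
  rw [P, Finset.mem_union, Finset.mem_union]
  rcases hu' with h | h
  · exact Or.inl (Or.inr (h ▸ hmem))
  · exact Or.inr (h ▸ hmem)

/-- The key combinatorial lemma: for adjacent `u, v` there is a position `i` where the
incidence lists carry distinct edges, one of which is a forbidden partner of the other. -/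
lemma key {d : ℕ} (hd2 : 2 ≤ d) (hreg : G.IsRegularOfDegree d) {u v : V} (h : G.Adj u v) :
    ∃ (i : ℕ) (hu : i < (incEdges G σ u).length) (hv : i < (incEdges G σ v).length),
      (incEdges G σ u)[i] ≠ (incEdges G σ v)[i] ∧
      ((incEdges G σ v)[i] ∈ P G σ ((incEdges G σ u)[i]) ∨
       (incEdges G σ u)[i] ∈ P G σ ((incEdges G σ v)[i])) := by
  letI := σ
  have hneuv : u ≠ v := h.ne
  set f : G.edgeSet := ⟨s(u, v), (SimpleGraph.mem_edgeSet G).mpr h⟩ with hfdef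
  have hfval : (f : Sym2 V) = s(u, v) := rfl
  have hfval' : (f : Sym2 V) = s(v, u) := by rw [hfval, Sym2.eq_swap]
  have hfu : u ∈ (f : Sym2 V) := by rw [hfval]; exact Sym2.mem_iff.mpr (Or.inl rfl)
  have hfv : v ∈ (f : Sym2 V) := by rw [hfval]; exact Sym2.mem_iff.mpr (Or.inr rfl)
  have hlu : (incEdges G σ u).length = d := by rw [length_incEdges]; exact hreg u
  have hlv : (incEdges G σ v).length = d := by rw [length_incEdges]; exact hreg v
  set ku := (incEdges G σ u).idxOf f with hkudef
  set kv := (incEdges G σ v).idxOf f with hkvdef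
  have hku : ku < (incEdges G σ u).length := indexOf_lt_length_incEdges G σ hfu
  have hkv : kv < (incEdges G σ v).length := indexOf_lt_length_incEdges G σ hfv
  have hgu : (incEdges G σ u)[ku]'hku = f := getElem_indexOf_incEdges G σ hfu
  have hgv : (incEdges G σ v)[kv]'hkv = f := getElem_indexOf_incEdges G σ hfv
  rcases lt_trichotomy ku kv with hlt | heq | hgt
  · -- unbalanced, ku < kv
    have hkuv : ku < (incEdges G σ v).length := by omega
    refine ⟨ku, hku, hkuv, ?_, ?_⟩
    · have hblt : σ.lt ((incEdges G σ v)[ku]'hkuv) f := by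
        have := incEdges_get_lt G σ hlt hkv
        rwa [hgv] at this
      rw [hgu]
      exact fun hh => slt_irrefl G σ _ (hh ▸ hblt)
    · left
      rw [hgu]
      refine mem_P_of_own G σ (mem_own_of G σ hfval hlt (List.getElem?_eq_getElem hkuv) ?_)
      have := incEdges_get_lt G σ hlt hkv
      rwa [hgv] at this
  · -- balanced
    by_cases hk0 : ku = 0
    · -- f is minimal at both ends: compare at position d - 1
      have hiu : d - 1 < (incEdges G σ u).length := by omega
      have hiv : d - 1 < (incEdges G σ v).length := by omega
      set a := (incEdges G σ u)[d-1]'hiu with hadef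
      set b := (incEdges G σ v)[d-1]'hiv with hbdef
      have hua : u ∈ (a : Sym2 V) := mem_of_getElem_incEdges G σ hiu
      have hvb : v ∈ (b : Sym2 V) := mem_of_getElem_incEdges G σ hiv
      have hia : (incEdges G σ u).idxOf a = d - 1 := indexOf_getElem_incEdges G σ hiu
      have hib : (incEdges G σ v).idxOf b = d - 1 := indexOf_getElem_incEdges G σ hiv
      have hab : a ≠ b := by
        intro hh
        have : a = f := common_eq G hneuv hua (hh ▸ hvb) hfval
        rw [this] at hia
        omega
      refine ⟨d - 1, hiu, hiv, hab, ?_⟩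
      have hcu : (if (incEdges G σ u).idxOf a + 1 < (incEdges G σ u).length
          then (incEdges G σ u)[(incEdges G σ u).idxOf a + 1]?
          else (incEdges G σ u)[0]?) = some f := by
        rw [if_neg (by omega), List.getElem?_eq_getElem (by omega : 0 < (incEdges G σ u).length)]
        have : (incEdges G σ u)[0]'(by omega) = (incEdges G σ u)[ku]'hku := by
          congr 1; omega
        rw [this, hgu]
      have hcv : (if (incEdges G σ v).idxOf b + 1 < (incEdges G σ v).length
          then (incEdges G σ v)[(incEdges G σ v).idxOf b + 1]?
          else (incEdges G σ v)[0]?) = some f := by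
        rw [if_neg (by omega), List.getElem?_eq_getElem (by omega : 0 < (incEdges G σ v).length)]
        have : (incEdges G σ v)[0]'(by omega) = (incEdges G σ v)[kv]'hkv := by
          congr 1; omega
        rw [this, hgv]
      rcases slt_trichot G σ a b with hab' | hab' | hab'
      · right
        refine mem_P_of_contrib G σ hcv ?_ ?_ hab' hvb
        · rw [oth_spec G hfval', hib]
          exact List.getElem?_eq_getElem hiu
        · rw [oth_spec G hfval']; omega
      · exact absurd hab' hab
      · left
        refine mem_P_of_contrib G σ hcu ?_ ?_ hab' hua
        · rw [oth_spec G hfval, hia]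
          exact List.getElem?_eq_getElem hiv
        · rw [oth_spec G hfval]; omega
    · -- compare at position ku - 1
      have hiu : ku - 1 < (incEdges G σ u).length := by omega
      have hiv : ku - 1 < (incEdges G σ v).length := by omega
      set a := (incEdges G σ u)[ku-1]'hiu with hadef
      set b := (incEdges G σ v)[ku-1]'hiv with hbdef
      have hua : u ∈ (a : Sym2 V) := mem_of_getElem_incEdges G σ hiu
      have hvb : v ∈ (b : Sym2 V) := mem_of_getElem_incEdges G σ hiv
      have hia : (incEdges G σ u).idxOf a = ku - 1 := indexOf_getElem_incEdges G σ hiu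
      have hib : (incEdges G σ v).idxOf b = ku - 1 := indexOf_getElem_incEdges G σ hiv
      have hab : a ≠ b := by
        intro hh
        have : a = f := common_eq G hneuv hua (hh ▸ hvb) hfval
        rw [this] at hia
        omega
      refine ⟨ku - 1, hiu, hiv, hab, ?_⟩
      have hcu : (if (incEdges G σ u).idxOf a + 1 < (incEdges G σ u).length
          then (incEdges G σ u)[(incEdges G σ u).idxOf a + 1]?
          else (incEdges G σ u)[0]?) = some f := by
        rw [if_pos (by omega), List.getElem?_eq_getElem (by omega : (incEdges G σ u).idxOf a + 1 < (incEdges G σ u).length)]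
        have : (incEdges G σ u)[(incEdges G σ u).idxOf a + 1]'(by omega)
            = (incEdges G σ u)[ku]'hku := by
          congr 1; omega
        rw [this, hgu]
      have hcv : (if (incEdges G σ v).idxOf b + 1 < (incEdges G σ v).length
          then (incEdges G σ v)[(incEdges G σ v).idxOf b + 1]?
          else (incEdges G σ v)[0]?) = some f := by
        rw [if_pos (by omega), List.getElem?_eq_getElem (by omega : (incEdges G σ v).idxOf b + 1 < (incEdges G σ v).length)]
        have : (incEdges G σ v)[(incEdges G σ v).idxOf b + 1]'(by omega)
            = (incEdges G σ v)[kv]'hkv := by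
          congr 1; omega
        rw [this, hgv]
      rcases slt_trichot G σ a b with hab' | hab' | hab'
      · right
        refine mem_P_of_contrib G σ hcv ?_ ?_ hab' hvb
        · rw [oth_spec G hfval', hib]
          exact List.getElem?_eq_getElem hiu
        · rw [oth_spec G hfval']; omega
      · exact absurd hab' hab
      · left
        refine mem_P_of_contrib G σ hcu ?_ ?_ hab' hua
        · rw [oth_spec G hfval, hia]
          exact List.getElem?_eq_getElem hiv
        · rw [oth_spec G hfval]; omega
  · -- unbalanced, kv < ku
    have hkvu : kv < (incEdges G σ u).length := by omega
    refine ⟨kv, hkvu, hkv, ?_, ?_⟩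
    · have hblt : σ.lt ((incEdges G σ u)[kv]'hkvu) f := by
        have := incEdges_get_lt G σ hgt hku
        rwa [hgu] at this
      rw [hgv]
      exact fun hh => slt_irrefl G σ _ (hh.symm ▸ hblt)
    · right
      rw [hgv]
      refine mem_P_of_own G σ (mem_own_of G σ hfval' hgt (List.getElem?_eq_getElem hkvu) ?_)
      have := incEdges_get_lt G σ hgt hku
      rwa [hgu] at this

/-- Greedy existence of a weighting avoiding all forbidden partners. -/
lemma exists_w (L : G.edgeSet → Finset ℝ) (hcard : ∀ e, 4 ≤ (L e).card)
    (s : Finset G.edgeSet) :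
    ∃ w : G.edgeSet → ℝ, ∀ e ∈ s, w e ∈ L e ∧ ∀ p ∈ P G σ e, p ∈ s → w e ≠ w p := by
  induction s using Finset.strongInduction with
  | _ s ih =>
    rcases s.eq_empty_or_nonempty with rfl | hne
    · exact ⟨fun _ => 0, by simp⟩
    · set m : G.edgeSet := @Finset.max' _ σ s hne with hmdef
      have hm : m ∈ s := @Finset.max'_mem _ σ s hne
      have hmax : ∀ x ∈ s, σ.le x m := fun x hx => @Finset.le_max' _ σ s x hx
      obtain ⟨w', hw'⟩ := ih (s.erase m) (Finset.erase_ssubset hm)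
      have hB : ∃ t, t ∈ L m ∧ t ∉ (P G σ m).image w' := by
        by_contra hcon
        push_neg at hcon
        have hsub : L m ⊆ (P G σ m).image w' := fun t ht => hcon t ht
        have h1 := Finset.card_le_card hsub
        have h2 := Finset.card_image_le (s := P G σ m) (f := w')
        have h3 := card_P_le G σ m
        have h4 := hcard m
        omega
      obtain ⟨t, htL, htB⟩ := hB
      refine ⟨fun q => if q = m then t else w' q, fun e he => ?_⟩
      by_cases hem : e = m
      · refine ⟨?_, fun p hp _ => ?_⟩
        · show (if e = m then t else w' e) ∈ L e
          rw [if_pos hem, hem]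
          exact htL
        · have hpm : ¬ p = m := by
            intro hh
            have h1 : σ.lt p e := lt_of_mem_P G σ hp
            rw [hh.trans hem.symm] at h1
            exact slt_irrefl G σ e h1
          show (if e = m then t else w' e) ≠ (if p = m then t else w' p)
          rw [if_pos hem, if_neg hpm]
          intro hh
          refine htB (Finset.mem_image.mpr ⟨p, ?_, hh.symm⟩)
          rw [← hem]
          exact hp
      · have he' : e ∈ s.erase m := Finset.mem_erase.mpr ⟨hem, he⟩
        obtain ⟨hL', hne'⟩ := hw' e he'
        refine ⟨?_, fun p hp hps => ?_⟩
        · show (if e = m then t else w' e) ∈ L e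
          rw [if_neg hem]
          exact hL'
        · have hpe : σ.lt p e := lt_of_mem_P G σ hp
          have hpm : ¬ p = m := by
            intro hh
            have h1 : σ.lt p m := slt_of_lt_of_le G σ hpe (hmax e he)
            rw [hh] at h1
            exact slt_irrefl G σ m h1
          show (if e = m then t else w' e) ≠ (if p = m then t else w' p)
          rw [if_neg hem, if_neg hpm]
          exact hne' p hp (Finset.mem_erase.mpr ⟨hpm, hps⟩)

end SeqAux

/-- If `G` is `d`-regular with `d ∈ {3,4,5}`, then `ch_σ^e(G) ≤ 9 − d`; that is,
`ch_σ^e(G) ≤ 4` for `d = 5`, `ch_σ^e(G) ≤ 5` for `d = 4`, and `ch_σ^e(G) ≤ 6` for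
`d = 3`. -/
theorem stmt_8 [Fintype V] [DecidableEq V] (G : SimpleGraph V) [DecidableRel G.Adj]
    (d : ℕ) (hd : d ∈ ({3, 4, 5} : Set ℕ)) (hreg : G.IsRegularOfDegree d)
    (σ : LinearOrder G.edgeSet)
    (L : G.edgeSet → Finset ℝ) (hL : ∀ e, (L e).card = 9 - d) :
    ∃ w : G.edgeSet → ℝ, (∀ e, w e ∈ L e) ∧ ProperSeq G σ w := by
  have hd' : d = 3 ∨ d = 4 ∨ d = 5 := by simpa using hd
  have hd2 : 2 ≤ d := by omega
  have hcard : ∀ e, 4 ≤ (L e).card := by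
    intro e
    rw [hL e]
    omega
  obtain ⟨w, hw⟩ := SeqAux.exists_w G σ L hcard Finset.univ
  refine ⟨w, fun e => (hw e (Finset.mem_univ e)).1, ?_⟩
  intro u v huv heq
  obtain ⟨i, hu, hv, hne, hP⟩ := SeqAux.key G σ hd2 hreg huv
  have heq' : ((incEdges G σ u).map w)[i]? = ((incEdges G σ v).map w)[i]? := by
    simp only [seqColor] at heq
    rw [heq]
  rw [List.getElem?_map, List.getElem?_map, List.getElem?_eq_getElem hu,
    List.getElem?_eq_getElem hv] at heq'
  have hval : w ((incEdges G σ u)[i]'hu) = w ((incEdges G σ v)[i]'hv) := by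
    simpa using heq'
  rcases hP with hP | hP
  · exact (hw _ (Finset.mem_univ _)).2 _ hP (Finset.mem_univ _) hval
  · exact (hw _ (Finset.mem_univ _)).2 _ hP (Finset.mem_univ _) hval.symm
end
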